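/- arXiv:2408.03226 — 5 statements merged into one kernel-verified Lean document; each statement's English description precedes it below -/
import Mathlib

section
/- Every countable discrete subgroup of the additive group of a normed space is a free Abelian group. Precisely: if X is a real normed vector space and A is a countable additive subgroup of X which is discrete in the norm topology, then A is a free ℤ-module. -/
open Submodule Set Function

/-- Every countable discrete subgroup of the additive group of a real normed
space is a free Abelian group (free `ℤ`-module). -/
theorem countable_discrete_subgroup_of_normed_space_free
    (X : Type*) [NormedAddCommGroup X] [NormedSpace ℝ X]
    (A : AddSubgroup X) [Countable A] [DiscreteTopology A] :
    Module.Free ℤ A := by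
  classical
  set M : Submodule ℤ X := AddSubgroup.toIntSubmodule A with hM
  let eqv : (M : Type _) ≃+ A :=
    { toFun := fun x => ⟨x.1, x.2⟩
      invFun := fun x => ⟨x.1, x.2⟩
      left_inv := fun _ => rfl
      right_inv := fun _ => rfl
      map_add' := fun _ _ => rfl }
  suffices h : Module.Free ℤ M by
    exact Module.Free.of_equiv eqv.toIntLinearEquiv
  haveI : Countable M := Countable.of_equiv A eqv.symm.toEquiv
  obtain ⟨e, he⟩ := exists_surjective_nat M
  let g : ℕ → X := fun n => (e n : X)
  let V : ℕ → Submodule ℝ X := fun n => Submodule.span ℝ (g '' Set.Iio n)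
  haveI hVfd : ∀ n, FiniteDimensional ℝ (V n) := fun n =>
    FiniteDimensional.span_of_finite ℝ ((Set.finite_Iio n).image g)
  let B : ℕ → Submodule ℤ M := fun n =>
    Submodule.comap M.subtype ((V n).restrictScalars ℤ)
  have hBmono : Monotone B := fun m n h =>
    Submodule.comap_mono (fun x hx => Submodule.span_mono
      (Set.image_mono (fun i (hi : i < m) => lt_of_lt_of_le hi h)) hx)
  have hBtop : (⨆ n, B n) = ⊤ := by
    rw [eq_top_iff]
    rintro x -
    obtain ⟨i, rfl⟩ := he x
    refine Submodule.mem_iSup_of_mem (i + 1) ?_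
    exact Submodule.subset_span ⟨i, Set.mem_Iio.2 (Nat.lt_succ_self i), rfl⟩
  have hB0 : B 0 = ⊥ := by
    ext x
    simp only [Submodule.mem_bot]
    constructor
    · intro hx
      have h0 : (x : X) ∈ Submodule.span ℝ (g '' Set.Iio 0) := hx
      rw [show Set.Iio 0 = (∅ : Set ℕ) by ext i; simp,
        Set.image_empty, Submodule.span_empty, Submodule.mem_bot] at h0
      exact Subtype.ext h0
    · rintro rfl
      exact Submodule.zero_mem _
  -- each `B n` is a finitely generated ℤ-module
  have hBfin : ∀ n, Module.Finite ℤ (B n) := by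
    intro n
    let C : Submodule ℤ (V n) := Submodule.comap ((V n).subtype.restrictScalars ℤ) M
    haveI : DiscreteTopology C :=
      DiscreteTopology.preimage_of_continuous_injective (A : Set X)
        continuous_subtype_val Subtype.val_injective
    haveI : Module.Finite ℤ C := inferInstance
    let φ : (B n : Type _) ≃+ C :=
      { toFun := fun x => ⟨⟨x.1.1, x.2⟩, x.1.2⟩
        invFun := fun y => ⟨⟨y.1.1, y.2⟩, y.1.2⟩
        left_inv := fun _ => rfl
        right_inv := fun _ => rfl
        map_add' := fun _ _ => rfl }
    exact Module.Finite.equiv φ.symm.toIntLinearEquiv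
  -- divisibility: if `k • x ∈ B n` with `k ≠ 0` then `x ∈ B n`
  have hdiv : ∀ (n : ℕ) (x : M) (k : ℤ), k ≠ 0 → k • x ∈ B n → x ∈ B n := by
    intro n x k hk hx
    have h1 : ((k • x : M) : X) ∈ V n := hx
    have h2 : (k : ℝ) • (x : X) ∈ V n := by
      rwa [Int.cast_smul_eq_zsmul] 
    have h3 : (x : X) = (k : ℝ)⁻¹ • ((k : ℝ) • (x : X)) := by
      rw [smul_smul, inv_mul_cancel₀ (by exact_mod_cast hk), one_smul]
    show (x : X) ∈ V n
    rw [h3]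
    exact (V n).smul_mem _ h2
  -- the key step: extend a basis of `B n` to a basis of `B (n+1)`
  have step : ∀ (n : ℕ) (s : Set M), LinearIndependent ℤ ((↑) : s → M) →
      Submodule.span ℤ s = B n →
      ∃ t : Set M, s ⊆ t ∧ LinearIndependent ℤ ((↑) : t → M) ∧
        Submodule.span ℤ t = B (n + 1) := by
    intro n s hli hspan
    haveI := hBfin (n + 1)
    have hle : B n ≤ B (n + 1) := hBmono (Nat.le_succ n)
    let N : Submodule ℤ (B (n + 1)) := Submodule.comap (B (n + 1)).subtype (B n)
    haveI : Module.Finite ℤ (↥(B (n + 1)) ⧸ N) :=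
      Module.Finite.of_surjective N.mkQ N.mkQ_surjective
    haveI : NoZeroSMulDivisors ℤ (↥(B (n + 1)) ⧸ N) := by
      refine ⟨fun {k q} h => ?_⟩
      by_cases hk : k = 0
      · exact Or.inl hk
      refine Or.inr ?_
      obtain ⟨x, rfl⟩ := N.mkQ_surjective q
      rw [← map_smul, Submodule.mkQ_apply, Submodule.Quotient.mk_eq_zero] at h
      have hx : (k • (x : M)) ∈ B n := h
      have hxn : (x : M) ∈ B n := hdiv n x.1 k hk hx
      rw [Submodule.mkQ_apply, Submodule.Quotient.mk_eq_zero]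
      exact hxn
    haveI : Module.Free ℤ (↥(B (n + 1)) ⧸ N) := Module.free_of_finite_type_torsion_free'
    obtain ⟨σ, hσ⟩ := Module.projective_lifting_property N.mkQ LinearMap.id N.mkQ_surjective
    have hσ' : ∀ q, N.mkQ (σ q) = q := fun q => LinearMap.congr_fun hσ q
    have hσinj : Function.Injective σ := by
      intro a b hab
      have := congrArg N.mkQ hab
      rwa [hσ', hσ'] at this
    let D' : Submodule ℤ (B (n + 1)) := LinearMap.range σ
    have hND'sup : N ⊔ D' = ⊤ := by
      rw [eq_top_iff]
      rintro x -
      have hmem : x - σ (N.mkQ x) ∈ N := by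
        rw [← Submodule.Quotient.mk_eq_zero, ← Submodule.mkQ_apply, map_sub, hσ', sub_self]
      refine Submodule.mem_sup.2 ⟨x - σ (N.mkQ x), hmem, σ (N.mkQ x), ⟨N.mkQ x, rfl⟩, ?_⟩
      abel
    have hND'inf : N ⊓ D' = ⊥ := by
      rw [eq_bot_iff]
      rintro x ⟨hxN, q, rfl⟩
      have h0 : q = 0 := by
        have := hσ' q
        rw [show N.mkQ (σ q) = 0 from by
          rw [Submodule.mkQ_apply, Submodule.Quotient.mk_eq_zero]; exact hxN] at this
        exact this.symm
      simp [h0]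
    let D : Submodule ℤ M := D'.map (B (n + 1)).subtype
    have hmapN : (Submodule.map (B (n + 1)).subtype N) = B n := by
      rw [Submodule.map_comap_subtype]
      exact inf_eq_right.mpr hle
    have hD1 : B n ⊔ D = B (n + 1) := by
      rw [← hmapN, ← Submodule.map_sup, hND'sup, Submodule.map_top, Submodule.range_subtype]
    have hD2 : B n ⊓ D = ⊥ := by
      rw [← hmapN, ← Submodule.map_inf _ (Submodule.injective_subtype _), hND'inf,
        Submodule.map_bot]
    haveI : Module.Free ℤ D :=
      Module.Free.of_equiv ((LinearEquiv.ofInjective σ hσinj).trans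
        (Submodule.equivMapOfInjective _ (Submodule.injective_subtype _) D'))
    let b := Module.Free.chooseBasis ℤ D
    let u : _ → M := fun i => ((b i : D) : M)
    have hu : Set.range u = D.subtype '' Set.range b := by
      rw [← Set.range_comp]; rfl
    have huli : LinearIndependent ℤ ((↑) : Set.range u → M) :=
      (b.linearIndependent.map' D.subtype (Submodule.ker_subtype D)).linearIndepOn_id
    have huspan : Submodule.span ℤ (Set.range u) = D := by
      rw [hu, ← Submodule.map_span, b.span_eq, Submodule.map_top, Submodule.range_subtype]
    refine ⟨s ∪ Set.range u, Set.subset_union_left, ?_, ?_⟩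
    · exact LinearIndepOn.id_union hli huli (by rw [hspan, huspan]; exact disjoint_iff.mpr hD2)
    · rw [Submodule.span_union, hspan, huspan, hD1]
  choose F hF1 hF2 hF3 using step
  have hbase : LinearIndependent ℤ ((↑) : (∅ : Set M) → M) ∧
      Submodule.span ℤ (∅ : Set M) = B 0 :=
    ⟨linearIndependent_empty ℤ M, by rw [Submodule.span_empty, hB0]⟩
  let S : ∀ n : ℕ, {s : Set M // LinearIndependent ℤ ((↑) : s → M) ∧
      Submodule.span ℤ s = B n} := fun n =>
    Nat.rec ⟨∅, hbase⟩
      (fun n p => ⟨F n p.1 p.2.1 p.2.2, hF2 n p.1 p.2.1 p.2.2, hF3 n p.1 p.2.1 p.2.2⟩) n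
  have hchain : ∀ n, (S n).1 ⊆ (S (n + 1)).1 := fun n =>
    hF1 n (S n).1 (S n).2.1 (S n).2.2
  have hmono : Monotone (fun n => (S n).1) := monotone_nat_of_le_succ hchain
  have hli : LinearIndependent ℤ ((↑) : (⋃ n, (S n).1) → M) :=
    linearIndepOn_iUnion_of_directed (v := id) hmono.directed_le (fun n => (S n).2.1)
  have hsp : Submodule.span ℤ (⋃ n, (S n).1) = ⊤ := by
    rw [Submodule.span_iUnion]
    rw [iSup_congr (fun n => (S n).2.2)]
    exact hBtop
  exact Module.Free.of_basis (Module.Basis.mk hli (by rw [Subtype.range_coe, hsp]))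
end

section
/- Every discrete subgroup of the additive group of a normed space is ℵ₁-free: if X is a real normed vector space and A is an additive subgroup of X which is discrete in the norm topology, then every countable subgroup of A is a free ℤ-module. -/
open Submodule

/-- An abelian group with a filtration by finitely generated pure submodules starting at `⊥`
and exhausting the group is free. -/
theorem free_of_filtration {M : Type*} [AddCommGroup M] (W : ℕ → Submodule ℤ M)
    (hmono : Monotone W) (h0 : W 0 = ⊥) (htop : ⨆ n, W n = ⊤)
    (hfin : ∀ n, Module.Finite ℤ (W n))
    (hpure : ∀ (n : ℕ) (x : M) (k : ℤ), k ≠ 0 → k • x ∈ W n → x ∈ W n) :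
    Module.Free ℤ M := by
  classical
  have key : ∀ n : ℕ, ∃ C : Submodule ℤ M, C ≤ W (n + 1) ∧ W n ⊔ C = W (n + 1) ∧
      C ⊓ W n = ⊥ ∧ Module.Free ℤ C := by
    intro n
    set ι : Submodule ℤ (W (n + 1)) := comap (W (n + 1)).subtype (W n) with hι
    have hmapι : map (W (n + 1)).subtype ι = W n := by
      rw [hι, Submodule.map_comap_subtype]
      exact inf_eq_right.mpr (hmono n.le_succ)
    have hfinQ : Module.Finite ℤ ((W (n + 1)) ⧸ ι) := by
      have := hfin (n + 1)
      infer_instance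
    have htf : NoZeroSMulDivisors ℤ ((W (n + 1)) ⧸ ι) := by
      refine ⟨fun {k x} h => ?_⟩
      by_cases hk : k = 0
      · exact Or.inl hk
      · right
        obtain ⟨y, rfl⟩ := ι.mkQ_surjective x
        rw [← map_smul, ι.mkQ_apply, Submodule.Quotient.mk_eq_zero] at h
        rw [ι.mkQ_apply, Submodule.Quotient.mk_eq_zero]
        have h2 : k • (y : M) ∈ W n := by exact h
        exact hpure n _ k hk h2
    have hfreeQ : Module.Free ℤ ((W (n + 1)) ⧸ ι) := inferInstance
    obtain ⟨s, hs⟩ := Module.projective_lifting_property ι.mkQ LinearMap.id ι.mkQ_surjective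
    have hs' : ∀ q, ι.mkQ (s q) = q := fun q => LinearMap.congr_fun hs q
    have hsinj : Function.Injective s := by
      intro a b hab
      have := congrArg ι.mkQ hab
      rwa [hs', hs'] at this
    refine ⟨map (W (n + 1)).subtype (LinearMap.range s), map_subtype_le _ _, ?_, ?_, ?_⟩
    · have hsup : ι ⊔ LinearMap.range s = ⊤ := by
        rw [eq_top_iff]
        intro x _
        have hx : x - s (ι.mkQ x) ∈ ι := by
          rw [← Submodule.Quotient.mk_eq_zero, ← ι.mkQ_apply, map_sub, hs', sub_self]
        exact Submodule.mem_sup.2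
          ⟨x - s (ι.mkQ x), hx, s (ι.mkQ x), ⟨_, rfl⟩, sub_add_cancel x _⟩
      rw [← hmapι, ← Submodule.map_sup, hsup, Submodule.map_top, Submodule.range_subtype]
    · have hinf : LinearMap.range s ⊓ ι = ⊥ := by
        rw [eq_bot_iff]
        rintro x ⟨⟨q, rfl⟩, hx⟩
        have hq : q = 0 := by
          have h0' : ι.mkQ (s q) = 0 := by
            rw [ι.mkQ_apply, Submodule.Quotient.mk_eq_zero]; exact hx
          rwa [hs'] at h0'
        simp [hq]
      calc map (W (n + 1)).subtype (LinearMap.range s) ⊓ W n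
          = map (W (n + 1)).subtype (LinearMap.range s) ⊓ map (W (n + 1)).subtype ι := by
            rw [hmapι]
        _ = map (W (n + 1)).subtype (LinearMap.range s ⊓ ι) :=
            (Submodule.map_inf _ (W (n + 1)).injective_subtype).symm
        _ = ⊥ := by rw [hinf, Submodule.map_bot]
    · have e1 : ((W (n + 1)) ⧸ ι) ≃ₗ[ℤ] LinearMap.range s := LinearEquiv.ofInjective s hsinj
      have e2 : LinearMap.range s ≃ₗ[ℤ] map (W (n + 1)).subtype (LinearMap.range s) :=
        Submodule.equivMapOfInjective _ (W (n + 1)).injective_subtype _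
      exact Module.Free.of_equiv (e1.trans e2)
  choose C hCle hCsup hCinf hCfree using key
  have hCW : ∀ {j m : ℕ}, j < m → C j ≤ W m := fun {j m} h => (hCle j).trans (hmono h)
  have hfinsup : ∀ (n : ℕ) (s : Finset ℕ), n ∉ s → ∀ x ∈ C n,
      x ∈ (⨆ j ∈ s, C j) → x = 0 := by
    intro n s
    induction s using Finset.induction_on_max with
    | empty => intro _ x _ hxs; simpa using hxs
    | insert a t ha IH =>
      intro hns x hx hxs
      rw [Finset.iSup_insert] at hxs
      obtain ⟨z, hz, y, hy, rfl⟩ := Submodule.mem_sup.1 hxs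
      have hns' : n ∉ t := fun h => hns (Finset.mem_insert_of_mem h)
      have hyW : ∀ {m : ℕ}, (∀ j ∈ t, j < m) → y ∈ W m := by
        intro m hm
        have hle : (⨆ j ∈ t, C j) ≤ W m := iSup_le fun j => iSup_le fun hj => hCW (hm j hj)
        exact hle hy
      rcases lt_trichotomy n a with hlt | rfl | hgt
      · have hxW : z + y ∈ W a := hCW hlt hx
        have hzW : z ∈ W a := by
          have hy' := hyW ha
          simpa using sub_mem hxW hy'
        have hz0 : z = 0 := by
          have := (hCinf a).le ⟨hz, hzW⟩
          simpa using this
        subst hz0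
        simpa using IH hns' y (by simpa using hx) hy
      · exact absurd (Finset.mem_insert_self n t) hns
      · have hxW : z + y ∈ W n :=
          add_mem (hCW hgt hz) (hyW fun j hj => (ha j hj).trans hgt)
        have := (hCinf n).le ⟨hx, hxW⟩
        simpa using this
  have hindep : iSupIndep C := by
    rw [iSupIndep_def]
    intro n
    rw [disjoint_iff_inf_le]
    rintro x ⟨hx1, hx2⟩
    rw [iSup_subtype'] at hx2
    have hx2' : x ∈ ⨆ j : {j : ℕ // j ≠ n}, C j.1 := hx2
    rw [Submodule.mem_iSup_iff_exists_finset] at hx2'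
    obtain ⟨s, hs⟩ := hx2' 
    have hle : (⨆ i ∈ s, C i.1) ≤ ⨆ j ∈ s.image Subtype.val, C j :=
      iSup_le fun i => iSup_le fun hi =>
        le_iSup_of_le i.1 (le_iSup_of_le (Finset.mem_image_of_mem _ hi) le_rfl)
    have hns : n ∉ s.image Subtype.val := by
      intro h
      obtain ⟨j, -, hj⟩ := Finset.mem_image.1 h
      exact j.2 hj
    simp only [Submodule.mem_bot]
    exact hfinsup n _ hns x hx1 (hle hs)
  have hsup : ⨆ n, C n = ⊤ := by
    rw [eq_top_iff, ← htop]
    refine iSup_le fun n => ?_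
    induction n with
    | zero => rw [h0]; exact bot_le
    | succ m IH =>
      rw [← hCsup m]
      exact sup_le IH (le_iSup C m)
  have hInt : DirectSum.IsInternal C :=
    DirectSum.isInternal_submodule_of_iSupIndep_of_iSup_eq_top hindep hsup
  exact Module.Free.of_basis (hInt.collectedBasis fun n => (hCfree n).chooseBasis)

/-- Every discrete subgroup of the additive group of a real normed space is
`ℵ₁`-free: every countable subgroup of it is a free `ℤ`-module. -/
theorem discrete_subgroup_of_normed_space_aleph_one_free
    (X : Type*) [NormedAddCommGroup X] [NormedSpace ℝ X]
    (A : AddSubgroup X) [DiscreteTopology A]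
    (B : AddSubgroup X) (hBA : B ≤ A) [Countable B] :
    Module.Free ℤ B := by
  classical
  haveI hBd : DiscreteTopology B :=
    DiscreteTopology.of_subset (inferInstanceAs (DiscreteTopology A)) hBA
  obtain ⟨e, he⟩ := exists_surjective_nat B
  set V : ℕ → Submodule ℝ X := fun n => Submodule.span ℝ (Subtype.val '' (e '' Set.Iio n))
    with hV
  have hVfin : ∀ n, FiniteDimensional ℝ (V n) := fun n =>
    FiniteDimensional.span_of_finite ℝ (((Set.finite_Iio n).image e).image _)
  set W : ℕ → Submodule ℤ ↥B := fun n =>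
    Submodule.comap (B.subtype.toIntLinearMap) ((V n).restrictScalars ℤ) with hW
  have hWmem : ∀ (n : ℕ) (x : ↥B), x ∈ W n ↔ (x : X) ∈ V n := fun n x => Iff.rfl
  have hmono : Monotone W := fun m n hmn x hx => by
    rw [hWmem] at hx ⊢
    exact Submodule.span_mono
      (Set.image_mono (Set.image_mono (Set.Iio_subset_Iio hmn))) hx
  have hV0 : V 0 = ⊥ := by
    have h' : Set.Iio (0 : ℕ) = ∅ := by
      ext j; simp
    simp [hV, h']
  have h0 : W 0 = ⊥ := by
    ext x
    rw [hWmem, hV0]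
    simp only [Submodule.mem_bot]
    exact ⟨fun h => Subtype.ext h, fun h => by rw [h]; rfl⟩
  have htop : ⨆ n, W n = ⊤ := by
    rw [eq_top_iff]
    intro x _
    obtain ⟨k, rfl⟩ := he x
    refine Submodule.mem_iSup_of_mem (k + 1) ?_
    rw [hWmem]
    exact Submodule.subset_span ⟨e k, ⟨k, Set.mem_Iio.2 k.lt_succ_self, rfl⟩, rfl⟩
  have hpure : ∀ (n : ℕ) (x : ↥B) (k : ℤ), k ≠ 0 → k • x ∈ W n → x ∈ W n := by
    intro n x k hk hkx
    rw [hWmem] at hkx ⊢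
    have h1 : ((k • x : ↥B) : X) = (k : ℝ) • (x : X) := by
      push_cast
      rw [← Int.cast_smul_eq_zsmul ℝ]
    rw [h1] at hkx
    have hk' : (k : ℝ) ≠ 0 := Int.cast_ne_zero.2 hk
    have := (V n).smul_mem (k : ℝ)⁻¹ hkx
    rwa [inv_smul_smul₀ hk'] at this
  have hfin : ∀ n, Module.Finite ℤ (W n) := by
    intro n
    haveI := hVfin n
    set L' : Submodule ℤ ↥(V n) :=
      Submodule.comap ((V n).subtype.restrictScalars ℤ) (AddSubgroup.toIntSubmodule B) with hL'
    haveI : DiscreteTopology L' :=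
      DiscreteTopology.preimage_of_continuous_injective (B : Set X)
        continuous_subtype_val Subtype.val_injective
    haveI : Module.Finite ℤ L' := inferInstance
    let eqv : L' ≃ₗ[ℤ] W n :=
      { toFun := fun x => ⟨⟨(x : ↥(V n)), x.2⟩, (x : ↥(V n)).2⟩
        invFun := fun y => ⟨⟨((y : ↥B) : X), y.2⟩, (y : ↥B).2⟩
        map_add' := fun a b => rfl
        map_smul' := fun c a => rfl
        left_inv := fun a => rfl
        right_inv := fun a => rfl }
    exact Module.Finite.equiv eqv
  exact free_of_filtration W hmono h0 htop hfin hpure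
end

section
/- Let B be a free Abelian group (a free ℤ-module) and let A be a subgroup of B (so A is itself free). Then the quotient group B/A is a free ℤ-module if and only if every basis of A extends to a basis of B, i.e., for every ℤ-basis E of A (viewed as a subset of B) there exists a ℤ-basis F of B with E ⊆ F. -/
open Submodule Finsupp

/-- Every submodule of `ι →₀ ℤ` has a "basis set": a linearly independent subset of the
ambient module, contained in the submodule, spanning it. Proved by transfinite induction
along a well-ordering of `ι`. -/
theorem aux_basis_set (ι : Type*) (A : Submodule ℤ (ι →₀ ℤ)) :
    ∃ S : Set (ι →₀ ℤ), S ⊆ (A : Set (ι →₀ ℤ)) ∧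
      LinearIndependent ℤ ((↑) : S → (ι →₀ ℤ)) ∧ span ℤ S = A := by
  classical
  haveI : DecidableRel (WellOrderingRel (α := ι)) := Classical.decRel _
  letI : LinearOrder ι := linearOrderOfSTO WellOrderingRel
  haveI : WellFoundedLT ι := by
    constructor
    exact (inferInstance : IsWellOrder ι WellOrderingRel).toIsWellFounded.wf
  set I : ι → Ideal ℤ := fun i =>
    (A ⊓ Finsupp.supported ℤ ℤ {j | j ≤ i}).map (Finsupp.lapply i) with hIdef
  set d : ι → ℤ := fun i => Submodule.IsPrincipal.generator (I i) with hddef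
  have hd : ∀ i : ι, ∃ x : ι →₀ ℤ,
      (x ∈ A ∧ x ∈ Finsupp.supported ℤ ℤ {j | j ≤ i}) ∧ Finsupp.lapply (R := ℤ) i x = d i := by
    intro i
    have hmem : d i ∈ I i := Submodule.IsPrincipal.generator_mem (I i)
    rw [hIdef] at hmem
    obtain ⟨x, hx, hx2⟩ := Submodule.mem_map.1 hmem
    exact ⟨x, Submodule.mem_inf.1 hx, hx2⟩
  choose e he1 he2 using hd
  have hsupp : ∀ i : ι, ∀ k ∈ (e i).support, k ≤ i := by
    intro i k hk
    exact (Finsupp.mem_supported ℤ (e i)).1 (he1 i).2 hk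
  have hcoord : ∀ i j : ι, i < j → e i j = 0 := by
    intro i j hij
    by_contra h
    exact absurd (hsupp i j (Finsupp.mem_support_iff.2 h)) (not_le.2 hij)
  have heii : ∀ i : ι, e i i = d i := by
    intro i; simpa [Finsupp.lapply_apply] using he2 i
  set s : Set ι := {i | d i ≠ 0} with hsdef
  set f : s → (ι →₀ ℤ) := fun i => e i with hfdef
  -- linear independence
  have hli : LinearIndependent ℤ f := by
    rw [linearIndependent_iff']
    intro t
    induction t using Finset.induction_on_max with
    | empty => intro g _ i hi; simp at hi
    | insert a t hmax ih =>
      intro g hg i hi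
      have hat : a ∉ t := fun h => lt_irrefl a (hmax a h)
      have hga : g a = 0 := by
        have h1 := congrArg (fun z : ι →₀ ℤ => z a.1) hg
        simp only [Finsupp.finset_sum_apply, Finsupp.smul_apply, smul_eq_mul,
          Finsupp.coe_zero, Pi.zero_apply] at h1
        rw [Finset.sum_insert hat] at h1
        have hz : ∀ b ∈ t, g b * (f b) a.1 = 0 := by
          intro b hb
          have : (f b) a.1 = 0 := hcoord b.1 a.1 (hmax b hb)
          rw [this, mul_zero]
        rw [Finset.sum_eq_zero hz, add_zero, hfdef] at h1
        simp only [heii a.1] at h1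
        exact (mul_eq_zero.1 h1).resolve_right a.2
      have ht : ∑ j ∈ t, g j • f j = 0 := by
        rwa [Finset.sum_insert hat, hga, zero_smul, zero_add] at hg
      rcases Finset.mem_insert.1 hi with rfl | hi'
      · exact hga
      · exact ih g ht i hi'
  -- spanning
  have hspan : ∀ i : ι, ∀ x ∈ A, (∀ k ∈ x.support, k ≤ i) →
      x ∈ span ℤ (Set.range f) := by
    intro i
    induction i using WellFoundedLT.induction with
    | _ i ih =>
      have helper : ∀ z ∈ A, (∀ k ∈ Finsupp.support z, k ≤ i) → z i = 0 →
          z ∈ span ℤ (Set.range f) := by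
        intro z hz hzs hzi
        by_cases hz0 : z = 0
        · simp [hz0]
        · have hne : z.support.Nonempty := Finsupp.support_nonempty_iff.2 hz0
          set k := z.support.max' hne with hkdef
          have hkmem : k ∈ z.support := z.support.max'_mem hne
          have hki : k < i := by
            refine lt_of_le_of_ne (hzs k hkmem) ?_
            intro h
            exact (Finsupp.mem_support_iff.1 hkmem) (h ▸ hzi)
          exact ih k hki z hz (fun m hm => z.support.le_max' m hm)
      intro x hxA hxs
      have hcI : x i ∈ I i := by
        rw [hIdef]
        exact Submodule.mem_map.2 ⟨x, Submodule.mem_inf.2 ⟨hxA,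
          (Finsupp.mem_supported ℤ x).2 hxs⟩, Finsupp.lapply_apply i x⟩
      rw [← Submodule.IsPrincipal.span_singleton_generator (I i)] at hcI
      obtain ⟨m, hm⟩ := Submodule.mem_span_singleton.1 hcI
      have hm' : m * d i = x i := hm
      by_cases hdi : d i = 0
      · have : x i = 0 := by rw [← hm', hdi, mul_zero]
        exact helper x hxA hxs this
      · have hiS : i ∈ s := hdi
        set y := x - m • e i with hydef
        have hyA : y ∈ A := A.sub_mem hxA (A.smul_mem m (he1 i).1)
        have hys : ∀ k ∈ y.support, k ≤ i := by
          intro k hk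
          by_contra hik
          push_neg at hik
          have hx0 : x k = 0 := by
            by_contra h
            exact absurd (hxs k (Finsupp.mem_support_iff.2 h)) (not_le.2 hik)
          have he0 : e i k = 0 := hcoord i k hik
          have : y k = 0 := by simp [hydef, hx0, he0]
          exact (Finsupp.mem_support_iff.1 hk) this
        have hyi : y i = 0 := by
          simp [hydef, heii i, ← hm', smul_eq_mul]
        have hy := helper y hyA hys hyi
        have hfi : e i ∈ span ℤ (Set.range f) :=
          Submodule.subset_span ⟨⟨i, hiS⟩, rfl⟩
        have : x = y + m • e i := by rw [hydef]; abel
        rw [this]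
        exact Submodule.add_mem _ hy (Submodule.smul_mem _ m hfi)
  have hspanA : span ℤ (Set.range f) = A := by
    apply le_antisymm
    · rw [Submodule.span_le]
      rintro _ ⟨j, rfl⟩
      exact (he1 j.1).1
    · intro x hx
      by_cases hx0 : x = 0
      · simp [hx0]
      · have hne : x.support.Nonempty := Finsupp.support_nonempty_iff.2 hx0
        exact hspan (x.support.max' hne) x hx (fun k hk => x.support.le_max' k hk)
  refine ⟨Set.range f, ?_, ?_, hspanA⟩
  · rintro _ ⟨j, rfl⟩
    exact (he1 j.1).1
  · exact hli.linearIndepOn_id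

/-- Every submodule of a free ℤ-module has a basis which is a subset of the ambient module. -/
theorem exists_basis_set {B : Type*} [AddCommGroup B] [Module ℤ B] [Module.Free ℤ B]
    (A : Submodule ℤ B) :
    ∃ S : Set B, S ⊆ (A : Set B) ∧ LinearIndependent ℤ ((↑) : S → B) ∧ span ℤ S = A := by
  let e : B ≃ₗ[ℤ] (Module.Free.ChooseBasisIndex ℤ B →₀ ℤ) := (Module.Free.chooseBasis ℤ B).repr
  obtain ⟨S, hS1, hS2, hS3⟩ := aux_basis_set _ (A.map e.toLinearMap)
  refine ⟨e.symm '' S, ?_, ?_, ?_⟩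
  · rintro _ ⟨x, hx, rfl⟩
    have := hS1 hx
    rw [SetLike.mem_coe, Submodule.mem_map] at this
    obtain ⟨y, hy, hyx⟩ := this
    simpa [← hyx] using hy
  · have h1 : LinearIndependent ℤ (fun x : S => e.symm (x : _)) :=
      hS2.map' e.symm.toLinearMap e.symm.ker
    have h2 := h1.linearIndepOn_id
    have : Set.range (fun x : S => e.symm (x : _)) = e.symm '' S := by
      rw [← Set.image_eq_range]
    rwa [this] at h2
  · rw [show ⇑e.symm = ⇑(e.symm : _ →ₗ[ℤ] B) from rfl, Submodule.span_image, hS3]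
    ext x
    simp only [Submodule.mem_map, Submodule.mem_map]
    constructor
    · rintro ⟨y, ⟨z, hz, rfl⟩, rfl⟩
      simpa using hz
    · intro hx
      exact ⟨e x, ⟨x, hx, rfl⟩, e.symm_apply_apply x⟩

/-- For a free Abelian group `B` and a subgroup (ℤ-submodule) `A` of `B`
(which is automatically free), the quotient `B ⧸ A` is a free `ℤ`-module if
and only if every basis of `A` (viewed as a subset of `B`) extends to a basis
of `B`. -/
theorem quotient_free_iff_every_basis_extends
    (B : Type*) [AddCommGroup B] [Module.Free ℤ B] (A : Submodule ℤ B) :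
    Module.Free ℤ (B ⧸ A) ↔
      ∀ E : Set B, E ⊆ (A : Set B) →
        LinearIndependent ℤ ((↑) : E → B) → Submodule.span ℤ E = A →
        ∃ F : Set B, E ⊆ F ∧ LinearIndependent ℤ ((↑) : F → B) ∧
          Submodule.span ℤ F = ⊤ := by
  constructor
  · intro hfree E hEA hEind hEspan
    -- get a section of the quotient map
    obtain ⟨s, hs⟩ := Module.projective_lifting_property A.mkQ (LinearMap.id) A.mkQ_surjective
    set C : Submodule ℤ B := LinearMap.range s with hCdef
    have hsec : ∀ y : B ⧸ A, A.mkQ (s y) = y := fun y => congrArg (fun g => g y) hs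
    have hc : IsCompl A C := by
      constructor
      · rw [disjoint_def]
        rintro x hxA ⟨y, rfl⟩
        have h0 : A.mkQ (s y) = 0 := (Submodule.Quotient.mk_eq_zero A).2 hxA
        rw [hsec y] at h0
        rw [h0, map_zero]
      · rw [codisjoint_iff, eq_top_iff]
        intro x _
        have h1 : x - s (A.mkQ x) ∈ A := by
          rw [← Submodule.Quotient.mk_eq_zero A]
          have : A.mkQ (x - s (A.mkQ x)) = 0 := by
            rw [map_sub, hsec, sub_self]
          simpa using this
        have h2 : s (A.mkQ x) ∈ C := ⟨A.mkQ x, rfl⟩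
        have : x = (x - s (A.mkQ x)) + s (A.mkQ x) := by abel
        rw [this]
        exact Submodule.add_mem_sup h1 h2
    let q := Submodule.quotientEquivOfIsCompl A C hc
    let b := Module.Free.chooseBasis ℤ (B ⧸ A)
    let bc := b.map q
    set v : Module.Free.ChooseBasisIndex ℤ (B ⧸ A) → B := fun i => (bc i : B) with hvdef
    have hvind : LinearIndependent ℤ v :=
      bc.linearIndependent.map' C.subtype (Submodule.ker_subtype C)
    have hvspan : span ℤ (Set.range v) = C := by
      have : Set.range v = C.subtype '' (Set.range bc) := by
        rw [← Set.range_comp]; rfl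
      rw [this, Submodule.span_image, Module.Basis.span_eq, Submodule.map_subtype_top]
    refine ⟨E ∪ Set.range v, Set.subset_union_left, ?_, ?_⟩
    · apply LinearIndepOn.id_union hEind hvind.linearIndepOn_id
      rw [hEspan, hvspan]
      exact hc.disjoint
    · rw [Submodule.span_union, hEspan, hvspan]
      exact hc.codisjoint.eq_top
  · intro h
    obtain ⟨E, hEA, hEind, hEspan⟩ := exists_basis_set A
    obtain ⟨F, hEF, hFind, hFspan⟩ := h E hEA hEind hEspan
    set C : Submodule ℤ B := span ℤ (F \ E) with hCdef
    have hdisj : Disjoint A C := by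
      rw [← hEspan, hCdef]
      have h1 := hFind.disjoint_span_image (s := (↑) ⁻¹' E) (t := (↑) ⁻¹' (F \ E))
        (Set.disjoint_sdiff_right.preimage _)
      rwa [Subtype.image_preimage_coe, Subtype.image_preimage_coe,
        Set.inter_eq_self_of_subset_right hEF,
        Set.inter_eq_self_of_subset_right Set.diff_subset] at h1
    have hc : IsCompl A C := by
      refine ⟨hdisj, ?_⟩
      rw [codisjoint_iff, ← hEspan, hCdef, ← Submodule.span_union,
        Set.union_diff_cancel hEF, hFspan]
    have hCind : LinearIndependent ℤ ((↑) : (F \ E : Set B) → B) :=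
      LinearIndepOn.mono (v := id) hFind Set.diff_subset
    haveI : Module.Free ℤ C := by
      haveI := Module.Free.of_basis (Module.Basis.span hCind)
      have hr : span ℤ (Set.range ((↑) : (F \ E : Set B) → B)) = C := by
        rw [Subtype.range_coe, hCdef]
      exact Module.Free.of_equiv (LinearEquiv.ofEq _ _ hr)
    exact Module.Free.of_equiv (Submodule.quotientEquivOfIsCompl A C hc).symm
end

section
/- Let κ be an uncountable regular cardinal and let A be a κ-free Abelian group of cardinality κ. Then the following are equivalent: (1) A is a free ℤ-module; (2) for every representation of A as the union of a continuous increasing chain (A_α)_{α<κ} of subgroups indexed by the ordinals below κ, with each A_α of cardinality less than κ, A_α ⊆ A_β whenever α ≤ β, and A_β = ⋃_{α<β} A_α for every limit ordinal β < κ, the set {α < κ : A/A_α is κ-free} contains a subset D of the ordinals below κ which is closed unbounded (i.e., D is unbounded in the ordinals below κ and contains the supremum of each of its nonempty bounded-below-κ subsets with limit supremum). -/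
open Cardinal

/-- An Abelian group `G` is `κ`-free if every subgroup of `G` of cardinality
smaller than `κ` is a free `ℤ`-module. -/
def IsKappaFree (κ : Cardinal) (G : Type*) [AddCommGroup G] : Prop :=
  ∀ B : AddSubgroup G, Cardinal.mk B < κ → Module.Free ℤ B

/-- A set `D` of ordinals below `κ` is a club in `κ`: it is unbounded below
`κ` and closed (contains the supremum of each of its nonempty subsets whose
supremum is a limit ordinal below `κ`). -/
def IsClubIn (D : Set Ordinal) (o : Ordinal) : Prop :=
  D ⊆ Set.Iio o ∧ (∀ α < o, ∃ β ∈ D, α ≤ β) ∧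
    ∀ S ⊆ D, S.Nonempty → sSup S < o → Order.IsSuccLimit (sSup S) → sSup S ∈ D


section AuxLemmas
variable {M N : Type*} [AddCommGroup M] [AddCommGroup N]

lemma myFreeOfAddEquiv (e : M ≃+ N) (h : Module.Free ℤ M) : Module.Free ℤ N :=
  Module.Free.of_equiv e.toIntLinearEquiv

end AuxLemmas


def myGrpEquiv {M : Type*} [AddCommGroup M] (S : AddSubgroup M) :
    ↥(AddSubgroup.toIntSubmodule S) ≃+ ↥S where
  toFun x := ⟨x.1, x.2⟩
  invFun x := ⟨x.1, x.2⟩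
  left_inv _ := rfl
  right_inv _ := rfl
  map_add' _ _ := rfl

def mySubEquiv {M : Type*} [AddCommGroup M] (q : Submodule ℤ M) : ↥q.toAddSubgroup ≃+ ↥q where
  toFun x := ⟨x.1, x.2⟩
  invFun x := ⟨x.1, x.2⟩
  left_inv _ := rfl
  right_inv _ := rfl
  map_add' _ _ := rfl

lemma myMkSpanLe {M : Type*} [AddCommGroup M] (s : Set M) :
    #(Submodule.span ℤ s) ≤ max #s ℵ₀ := by
  have h : Submodule.span ℤ s = LinearMap.range (Finsupp.linearCombination ℤ ((↑) : s → M)) := by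
    rw [Finsupp.range_linearCombination, Subtype.range_coe]
  have h1 : #(Submodule.span ℤ s) ≤ #(↥s →₀ ℤ) := by
    rw [h]; exact Cardinal.mk_le_of_surjective (LinearMap.surjective_rangeRestrict _)
  refine h1.trans ?_
  rcases isEmpty_or_nonempty s with hs | hs
  · exact le_max_of_le_right Cardinal.mk_le_aleph0
  · rw [Cardinal.mk_finsupp_lift_of_infinite']
    simp [Cardinal.lift_uzero, Cardinal.mk_int]

lemma myMemToInt {M : Type*} [AddCommGroup M] (S : AddSubgroup M) (x : M) :
    x ∈ AddSubgroup.toIntSubmodule S ↔ x ∈ S := Iff.rfl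

lemma myOrderIsoMapiSup {α β : Type*} [CompleteLattice α] [CompleteLattice β]
    (e : α ≃o β) {ι : Sort*} (f : ι → α) : e (⨆ i, f i) = ⨆ i, e (f i) := by
  apply le_antisymm
  · rw [← OrderIso.le_symm_apply]
    exact iSup_le fun i => (OrderIso.le_symm_apply _).mpr (le_iSup (fun i => e (f i)) i)
  · exact iSup_le fun i => e.monotone (le_iSup f i)

universe u

theorem fwd (κ : Cardinal.{u}) (hreg : κ.IsRegular) (hunc : Cardinal.aleph0 < κ)
    (A : Type u) [AddCommGroup A] (hkfree : IsKappaFree κ A)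
    (hfree : Module.Free ℤ A)
    (C : Ordinal.{u} → AddSubgroup A)
    (hcard : ∀ α < κ.ord, Cardinal.mk (C α) < κ)
    (hmono : ∀ α β, α ≤ β → β < κ.ord → C α ≤ C β)
    (hcont : ∀ β < κ.ord, Order.IsSuccLimit β → C β = ⨆ α < β, C α)
    (htop : (⨆ α < κ.ord, C α) = ⊤) :
    ∃ D : Set Ordinal, IsClubIn D κ.ord ∧ ∀ α ∈ D, IsKappaFree κ (A ⧸ C α) := by
  classical
  have hκ0 : 0 < κ.ord := by
    rw [Cardinal.lt_ord]; simpa using hreg.pos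
  have hordlim : Order.IsSuccLimit κ.ord := Cardinal.isSuccLimit_ord hreg.aleph0_le
  set b := Module.Free.chooseBasis ℤ A with hb
  set I := Module.Free.ChooseBasisIndex ℤ A with hI
  -- the club candidate
  set D : Set Ordinal := {α | α < κ.ord ∧ ∃ J : Set I,
    AddSubgroup.toIntSubmodule (C α) = Submodule.span ℤ (⇑b '' J)} with hD
  -- (S1) every element is in some C α
  have hS1 : ∀ a : A, ∃ α < κ.ord, a ∈ C α := by
    intro a
    have ha : a ∈ ⨆ α < κ.ord, C α := htop ▸ AddSubgroup.mem_top a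
    rw [iSup_subtype'] at ha
    have : Nonempty (Set.Iio κ.ord) := ⟨⟨0, hκ0⟩⟩
    have hdir : Directed (· ≤ ·) (fun α : Set.Iio κ.ord => C α.1) := by
      intro x y
      rcases le_total x.1 y.1 with h | h
      · exact ⟨y, hmono _ _ h y.2, le_rfl⟩
      · exact ⟨x, le_rfl, hmono _ _ h x.2⟩
    obtain ⟨⟨α, hα⟩, h⟩ := (AddSubgroup.mem_iSup_of_directed hdir).mp ha
    exact ⟨α, hα, h⟩
  -- (S2) small sets are contained in some C β, above any given ordinal
  have hS2 : ∀ (s : Set A), #s < κ → ∀ α₀ < κ.ord, ∃ β, α₀ < β ∧ β < κ.ord ∧ s ⊆ C β := by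
    intro s hs α₀ hα₀
    choose f hf1 hf2 using fun x : s => hS1 x.1
    set β : Ordinal := max (⨆ x, f x) (α₀ + 1) with hβ
    have hβκ : β < κ.ord := by
      apply max_lt _ (hordlim.succ_lt hα₀)
      exact Cardinal.iSup_lt_ord_of_isRegular hreg hs hf1
    refine ⟨β, ?_, hβκ, ?_⟩
    · exact lt_of_lt_of_le (Order.lt_succ α₀) (le_max_right _ _)
    · intro x hx
      refine hmono (f (⟨x, hx⟩ : s)) β ?_ hβκ (hf2 (⟨x, hx⟩ : s))
      exact le_trans (le_ciSup (Ordinal.bddAbove_range _) (⟨x, hx⟩ : s)) (le_max_left _ _)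
  -- (S3) supports
  have hS3 : ∀ (s : Set A), #s < κ → ∃ J : Set I, #J < κ ∧
      ∀ x ∈ s, x ∈ Submodule.span ℤ (⇑b '' J) := by
    intro s hs
    refine ⟨⋃ x : s, ((b.repr x.1).support : Set I), ?_, ?_⟩
    · refine lt_of_le_of_lt (Cardinal.mk_iUnion_le _) ?_
      refine Cardinal.mul_lt_of_lt hreg.aleph0_le hs ?_
      refine lt_of_le_of_lt (ciSup_le' fun x => ?_) hunc
      exact le_of_lt (Cardinal.finset_card_lt_aleph0 _)
    · intro x hx
      refine Submodule.span_mono (Set.image_mono ?_) (b.mem_span_repr_support x)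
      exact Set.subset_iUnion (fun y : s => ((b.repr y.1).support : Set I)) ⟨x, hx⟩
  -- step function for unboundedness
  have hstep : ∀ α : Set.Iio κ.ord, ∃ p : Set.Iio κ.ord × Set I, α.1 < p.1.1 ∧
      ((C α.1 : Set A) ⊆ (Submodule.span ℤ (⇑b '' p.2) : Set A)) ∧
      Submodule.span ℤ (⇑b '' p.2) ≤ AddSubgroup.toIntSubmodule (C p.1.1) := by
    intro α
    obtain ⟨J, hJκ, hJ⟩ := hS3 (C α.1 : Set A) (hcard α.1 α.2)
    obtain ⟨β, hαβ, hβκ, hβ⟩ := hS2 (⇑b '' J) (lt_of_le_of_lt (Cardinal.mk_image_le) hJκ)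
      α.1 α.2
    refine ⟨⟨⟨β, hβκ⟩, J⟩, hαβ, fun x hx => hJ x hx, ?_⟩
    rw [Submodule.span_le, AddSubgroup.coe_toIntSubmodule]
    exact hβ
  choose st hst1 hst2 hst3 using hstep
  have hunbD : ∀ α₀ < κ.ord, ∃ β ∈ D, α₀ ≤ β := by
    intro α₀ hα₀
    set seq : ℕ → Set.Iio κ.ord := fun n => (fun p => (st p).1)^[n] ⟨α₀, hα₀⟩ with hseq
    have hseqsucc : ∀ n, seq (n + 1) = (st (seq n)).1 := by
      intro n; show (fun p => (st p).1)^[n+1] _ = _; rw [Function.iterate_succ_apply']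
    have hmonoseq : ∀ n, (seq n).1 < (seq (n + 1)).1 := by
      intro n; rw [hseqsucc n]; exact hst1 (seq n)
    have hβκ' : (⨆ n, (seq n).1) < κ.ord := by
      refine Cardinal.iSup_lt_ord_lift_of_isRegular (f := fun n => (seq n).1) hreg ?_
        (fun n => Set.mem_Iio.mp (seq n).2)
      simpa using hunc
    set β : Ordinal := ⨆ n, (seq n).1 with hβ
    have hβκ : β < κ.ord := hβκ'

    have hle : ∀ n, (seq n).1 ≤ β := fun n => le_ciSup (Ordinal.bddAbove_range _) n
    have hltβ : ∀ n, (seq n).1 < β := fun n => lt_of_lt_of_le (hmonoseq n) (hle (n + 1))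
    have hβlim : Order.IsSuccLimit β := by
      rw [Ordinal.isSuccLimit_iff, Order.isSuccPrelimit_iff_succ_lt]
      constructor
      · exact fun h => absurd (h ▸ hltβ 0) not_lt_zero
      · intro a ha
        obtain ⟨n, hn⟩ := (Ordinal.lt_iSup_iff).mp ha
        exact lt_of_le_of_lt (Order.succ_le_of_lt hn) (lt_of_lt_of_le (hmonoseq n) (hle (n+1)))
    set J : Set I := ⋃ n, (st (seq n)).2 with hJ
    refine ⟨β, ⟨hβκ, J, ?_⟩, le_trans (le_of_eq rfl) (hle 0)⟩
    apply le_antisymm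
    · intro x hx
      have hx' : x ∈ C β := hx
      rw [hcont β hβκ hβlim, iSup_subtype'] at hx'
      have hne : Nonempty (Set.Iio β) := ⟨⟨0, hβlim.pos⟩⟩
      have hdir : Directed (· ≤ ·) (fun α : Set.Iio β => C α.1) := by
        intro y z
        rcases le_total y.1 z.1 with h | h
        · exact ⟨z, hmono _ _ h (lt_trans z.2 hβκ), le_rfl⟩
        · exact ⟨y, le_rfl, hmono _ _ h (lt_trans y.2 hβκ)⟩
      obtain ⟨⟨α, hα⟩, hmem⟩ := (AddSubgroup.mem_iSup_of_directed hdir).mp hx'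
      obtain ⟨n, hn⟩ := (Ordinal.lt_iSup_iff).mp hα
      have : x ∈ C (seq n).1 := hmono _ _ hn.le (seq n).2 hmem
      have h2 := hst2 (seq n) this
      refine Submodule.span_mono (Set.image_mono ?_) h2
      exact Set.subset_iUnion (fun n => (st (seq n)).2) n
    · rw [hJ, Set.image_iUnion, Submodule.span_iUnion]
      refine iSup_le fun n => le_trans (hst3 (seq n)) ?_
      have : C (st (seq n)).1.1 ≤ C β := by
        refine hmono _ _ ?_ hβκ
        rw [← hseqsucc n]; exact hle (n + 1)
      exact AddSubgroup.toIntSubmodule.monotone this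
  have hclosedD : ∀ S ⊆ D, S.Nonempty → sSup S < κ.ord → Order.IsSuccLimit (sSup S) → sSup S ∈ D := by
    intro S hSD hSne hSκ hSlim
    by_cases hmem : sSup S ∈ S
    · exact hSD hmem
    have hbdd : BddAbove S := ⟨κ.ord, fun γ hγ => le_of_lt (hSD hγ).1⟩
    have hlt : ∀ γ ∈ S, γ < sSup S := fun γ hγ =>
      lt_of_le_of_ne (le_csSup hbdd hγ) (by rintro rfl; exact hmem hγ)
    choose Jf hJf using fun γ : S => (hSD γ.2).2
    refine ⟨hSκ, ⋃ γ : S, Jf γ, le_antisymm ?_ ?_⟩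
    · intro x hx
      have hx' : x ∈ C (sSup S) := hx
      rw [hcont _ hSκ hSlim, iSup_subtype'] at hx'
      have hne : Nonempty (Set.Iio (sSup S)) := ⟨⟨0, hSlim.pos⟩⟩
      have hdir : Directed (· ≤ ·) (fun α : Set.Iio (sSup S) => C α.1) := by
        intro y z
        rcases le_total y.1 z.1 with h | h
        · exact ⟨z, hmono _ _ h (lt_trans z.2 hSκ), le_rfl⟩
        · exact ⟨y, le_rfl, hmono _ _ h (lt_trans y.2 hSκ)⟩
      obtain ⟨⟨α, hα⟩, hmemα⟩ := (AddSubgroup.mem_iSup_of_directed hdir).mp hx'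
      obtain ⟨γ, hγS, hαγ⟩ := (lt_csSup_iff hbdd hSne).mp hα
      have hxγ : x ∈ C γ := hmono _ _ hαγ.le (hSD hγS).1 hmemα
      have : x ∈ Submodule.span ℤ (⇑b '' Jf ⟨γ, hγS⟩) := by
        rw [← hJf ⟨γ, hγS⟩]; exact hxγ
      refine Submodule.span_mono (Set.image_mono ?_) this
      exact Set.subset_iUnion (fun γ : S => Jf γ) ⟨γ, hγS⟩
    · rw [Set.image_iUnion, Submodule.span_iUnion]
      refine iSup_le fun γ => ?_
      rw [← hJf γ]
      exact AddSubgroup.toIntSubmodule.monotone (hmono _ _ (hlt γ.1 γ.2).le hSκ)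
  have hquot : ∀ α ∈ D, IsKappaFree κ (A ⧸ C α) := by
    rintro α ⟨hακ, J, hJ⟩ B hB
    set π := QuotientAddGroup.mk' (C α) with hπ
    set K : AddSubgroup A := (Submodule.span ℤ (⇑b '' Jᶜ)).toAddSubgroup with hK
    have hKmem : ∀ x : A, x ∈ K ↔ x ∈ Submodule.span ℤ (⇑b '' Jᶜ) := fun x =>
      Submodule.mem_toAddSubgroup _
    have hdisj : ∀ x : A, x ∈ C α → x ∈ K → x = 0 := by
      intro x h1 h2
      have hd : Disjoint (Submodule.span ℤ (⇑b '' J)) (Submodule.span ℤ (⇑b '' Jᶜ)) :=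
        b.linearIndependent.disjoint_span_image disjoint_compl_right
      have h1' : x ∈ Submodule.span ℤ (⇑b '' J) := by
        rw [← hJ]; exact h1
      exact Submodule.disjoint_def.mp hd x h1' ((hKmem x).mp h2)
    have hdecomp : ∀ a : A, ∃ c ∈ C α, ∃ k ∈ K, c + k = a := by
      intro a
      have htop2 : Submodule.span ℤ (⇑b '' J) ⊔ Submodule.span ℤ (⇑b '' Jᶜ) = ⊤ := by
        rw [← Submodule.span_union, ← Set.image_union, Set.union_compl_self, Set.image_univ,
          b.span_eq]
      have : a ∈ Submodule.span ℤ (⇑b '' J) ⊔ Submodule.span ℤ (⇑b '' Jᶜ) := by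
        rw [htop2]; trivial
      obtain ⟨c, hc, k, hk, hck⟩ := Submodule.mem_sup.mp this
      refine ⟨c, ?_, k, (hKmem k).mpr hk, hck⟩
      have : c ∈ AddSubgroup.toIntSubmodule (C α) := by rw [hJ]; exact hc
      exact this
    set W : AddSubgroup A := (B.comap π) ⊓ K with hW
    have hWB : ∀ w : A, w ∈ W → π w ∈ B := by
      intro w hw
      exact (AddSubgroup.mem_comap.mp (AddSubgroup.mem_inf.mp hw).1)
    set φ : W →+ B := AddMonoidHom.codRestrict (π.comp W.subtype) B
      (fun w => hWB w.1 w.2) with hφ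
    have hπzero : ∀ x : A, π x = 0 ↔ x ∈ C α := by
      intro x
      rw [hπ, QuotientAddGroup.mk'_apply, QuotientAddGroup.eq_zero_iff]
    have hinj : Function.Injective φ := by
      rw [injective_iff_map_eq_zero]
      intro w hw
      have h1 : π w.1 = 0 := by
        have := congrArg (Subtype.val) hw
        exact this
      have h2 : w.1 ∈ C α := (hπzero w.1).mp h1
      have h3 : w.1 ∈ K := (AddSubgroup.mem_inf.mp w.2).2
      exact Subtype.ext (hdisj w.1 h2 h3)
    have hsurj : Function.Surjective φ := by
      intro b'
      obtain ⟨a, ha⟩ := QuotientAddGroup.mk'_surjective (C α) b'.1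
      obtain ⟨c, hc, k, hk, hck⟩ := hdecomp a
      have hπc : π c = 0 := (hπzero c).mpr hc
      have hπk : π k = b'.1 := by
        have : π c + π k = π a := by rw [← map_add, hck]
        rw [hπc, zero_add] at this
        rw [this, ha]
      have hkB : k ∈ B.comap π := AddSubgroup.mem_comap.mpr (by rw [hπk]; exact b'.2)
      refine ⟨⟨k, AddSubgroup.mem_inf.mpr ⟨hkB, hk⟩⟩, ?_⟩
      exact Subtype.ext hπk
    set e : W ≃+ B := AddEquiv.ofBijective φ ⟨hinj, hsurj⟩ with he
    have hWκ : #W < κ := by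
      rw [Cardinal.mk_congr e.toEquiv]; exact hB
    exact myFreeOfAddEquiv e (hkfree W hWκ)
  exact ⟨D, ⟨fun α hα => hα.1, hunbD, hclosedD⟩, hquot⟩



set_option maxHeartbeats 1600000 in
theorem freeOfFiltration (κ : Cardinal.{u}) (hreg : κ.IsRegular)
    (hunc : Cardinal.aleph0 < κ)
    {A : Type u} [AddCommGroup A]
    (D : Set Ordinal.{u}) (hDsub : D ⊆ Set.Iio κ.ord)
    (hDunb : ∀ α < κ.ord, ∃ β ∈ D, α ≤ β)
    (hDclosed : ∀ S ⊆ D, S.Nonempty → sSup S < κ.ord → Order.IsSuccLimit (sSup S) → sSup S ∈ D)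
    (P : Ordinal.{u} → Submodule ℤ A)
    (hPmono : ∀ α β, α ≤ β → β < κ.ord → P α ≤ P β)
    (hPcont : ∀ β < κ.ord, Order.IsSuccLimit β → ∀ x ∈ P β, ∃ α < β, x ∈ P α)
    (hPtop : ∀ x : A, ∃ α < κ.ord, x ∈ P α)
    (hPfree : ∀ β ∈ D, Module.Free ℤ (P β))
    (F : ↥D → Submodule ℤ A)
    (hFfree : ∀ γ : ↥D, Module.Free ℤ (F γ))
    (hFdisj : ∀ γ : ↥D, Disjoint (P γ.1) (F γ))
    (hFsup : ∀ γ : ↥D, P γ.1 ⊔ F γ = P (sInf {δ | δ ∈ D ∧ γ.1 < δ})) :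
    Module.Free ℤ A := by
  classical
  have hκ0 : 0 < κ.ord := by
    rw [Cardinal.lt_ord]; simpa using hreg.pos
  have hordlim : Order.IsSuccLimit κ.ord := Cardinal.isSuccLimit_ord hreg.aleph0_le
  have hDne : D.Nonempty := by
    obtain ⟨β, hβ, _⟩ := hDunb 0 hκ0; exact ⟨β, hβ⟩
  have hDlt : ∀ β ∈ D, β < κ.ord := fun β hβ => hDsub hβ
  set d₀ : Ordinal := sInf D with hd₀def
  have hd₀D : d₀ ∈ D := csInf_mem hDne
  have hd₀le : ∀ β ∈ D, d₀ ≤ β := fun β hβ => csInf_le (OrderBot.bddBelow D) hβ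
  set nxt : Ordinal → Ordinal := fun β => sInf {δ | δ ∈ D ∧ β < δ} with hnxtdef
  have hnxt : ∀ β < κ.ord, nxt β ∈ D ∧ β < nxt β := by
    intro β hβ
    have hne : {δ | δ ∈ D ∧ β < δ}.Nonempty := by
      obtain ⟨γ, hγD, hγ⟩ := hDunb (β + 1) (hordlim.succ_lt hβ)
      exact ⟨γ, hγD, lt_of_lt_of_le (Order.lt_succ β) hγ⟩
    exact csInf_mem hne
  have hnxtle : ∀ β γ, γ ∈ D → β < γ → nxt β ≤ γ := fun β γ hγD hβγ =>
    csInf_le (OrderBot.bddBelow _) ⟨hγD, hβγ⟩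
  have hFsup' : ∀ γ : ↥D, P γ.1 ⊔ F γ = P (nxt γ.1) := hFsup
  have hFle : ∀ γ : ↥D, ∀ β ∈ D, γ.1 < β → F γ ≤ P β := by
    intro γ β hβD hγβ
    refine le_trans (le_trans le_sup_right (hFsup' γ).le) ?_
    exact hPmono _ _ (hnxtle γ.1 β hβD hγβ) (hDlt β hβD)
  set T : Ordinal → Submodule ℤ A :=
    fun β => P d₀ ⊔ ⨆ γ : ↥D, ⨆ _ : γ.1 < β, F γ with hTdef
  have hTmono : ∀ β β', β ≤ β' → T β ≤ T β' := by
    intro β β' h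
    refine sup_le_sup_left (iSup_mono fun γ => ?_) _
    exact iSup_le fun hγ => le_iSup (fun _ : γ.1 < β' => F γ) (lt_of_lt_of_le hγ h)
  have hFleT : ∀ (γ : ↥D) (β : Ordinal), γ.1 < β → F γ ≤ T β := by
    intro γ β hγβ
    refine le_trans ?_ le_sup_right
    exact le_iSup_of_le γ (le_iSup (fun _ : γ.1 < β => F γ) hγβ)
  -- main spanning lemma
  have hA : ∀ β, β ∈ D → P β ≤ T β := by
    intro β
    induction β using Ordinal.induction with
    | _ β IH =>
    intro hβD
    by_cases hβd₀ : β = d₀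
    · subst hβd₀; exact le_sup_left
    have hd₀β : d₀ < β := lt_of_le_of_ne (hd₀le β hβD) (Ne.symm hβd₀)
    have hβκ : β < κ.ord := hDlt β hβD
    set S := D ∩ Set.Iio β with hSdef
    have hSD : S ⊆ D := Set.inter_subset_left
    have hSne : S.Nonempty := ⟨d₀, hd₀D, hd₀β⟩
    have hbddS : BddAbove S := ⟨β, fun γ hγ => hγ.2.le⟩
    have hσβ : sSup S ≤ β := csSup_le hSne fun γ hγ => hγ.2.le
    by_cases hσS : sSup S ∈ S
    · have hσκ : sSup S < κ.ord := lt_trans hσS.2 hβκ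
      have hnxtσ : nxt (sSup S) = β := by
        apply le_antisymm (hnxtle _ _ hβD hσS.2)
        by_contra hlt
        push_neg at hlt
        have h1 : nxt (sSup S) ∈ S := ⟨(hnxt _ hσκ).1, hlt⟩
        exact absurd (le_csSup hbddS h1) (not_le.mpr (hnxt _ hσκ).2)
      have hPβ : P β = P (sSup S) ⊔ F ⟨sSup S, hσS.1⟩ := by
        conv_lhs => rw [← hnxtσ]
        exact (hFsup' ⟨sSup S, hσS.1⟩).symm
      rw [hPβ]
      apply sup_le
      · exact le_trans (IH _ hσS.2 hσS.1) (hTmono _ _ hσβ)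
      · exact hFleT ⟨sSup S, hσS.1⟩ β hσS.2
    · have hσlim : Order.IsSuccLimit (sSup S) := by
        rw [Ordinal.isSuccLimit_iff, Order.isSuccPrelimit_iff_succ_lt]
        constructor
        · intro h0
          have h1 : d₀ ≤ sSup S := le_csSup hbddS ⟨hd₀D, hd₀β⟩
          rw [h0, nonpos_iff_eq_zero] at h1
          apply hσS
          rw [h0, ← h1]
          exact ⟨hd₀D, hd₀β⟩
        · intro a ha
          obtain ⟨γ, hγS, haγ⟩ := (lt_csSup_iff hbddS hSne).mp ha
          have hγσ : γ < sSup S :=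
            lt_of_le_of_ne (le_csSup hbddS hγS) (by rintro rfl; exact hσS hγS)
          exact lt_of_le_of_lt (Order.succ_le_of_lt haγ) hγσ
      have hσκ : sSup S < κ.ord := lt_of_le_of_lt hσβ hβκ
      have hσD : sSup S ∈ D := hDclosed S hSD hSne hσκ hσlim
      have hσeq : sSup S = β := by
        by_contra hne
        exact hσS ⟨hσD, lt_of_le_of_ne hσβ hne⟩
      intro x hx
      obtain ⟨α, hαβ, hxα⟩ := hPcont β hβκ (hσeq ▸ hσlim) x hx
      rw [← hσeq] at hαβ
      obtain ⟨γ, hγS, hαγ⟩ := (lt_csSup_iff hbddS hSne).mp hαβ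
      have hxγ : x ∈ P γ := hPmono _ _ hαγ.le (lt_trans hγS.2 hβκ) hxα
      exact le_trans (IH γ hγS.2 hγS.1) (hTmono _ _ hγS.2.le) hxγ
  -- global top
  have hTop : P d₀ ⊔ (⨆ γ : ↥D, F γ) = ⊤ := by
    rw [eq_top_iff]
    intro x _
    obtain ⟨α, hα, hxα⟩ := hPtop x
    obtain ⟨β, hβD, hαβ⟩ := hDunb α hα
    have hxβ : x ∈ P β := hPmono _ _ hαβ (hDlt β hβD) hxα
    have h1 : T β ≤ P d₀ ⊔ ⨆ γ : ↥D, F γ := by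
      refine sup_le le_sup_left (le_trans ?_ le_sup_right)
      exact iSup_le fun γ => iSup_le fun _ => le_iSup (fun γ : ↥D => F γ) γ
    exact h1 (hA β hβD hxβ)
  -- finite disjointness lemmas
  have hWle : ∀ (s : Finset ↥D) (β : Ordinal), β ∈ D → (∀ x ∈ s, x.1 < β) →
      P d₀ ⊔ s.sup F ≤ P β := by
    intro s β hβD hs
    refine sup_le (hPmono _ _ (hd₀le β hβD) (hDlt β hβD)) ?_
    exact Finset.sup_le fun x hx => hFle x β hβD (hs x hx)
  have hdisj0 : ∀ s : Finset ↥D, Disjoint (P d₀) (s.sup F) := by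
    intro s
    induction s using Finset.induction_on_max with
    | empty => simp
    | insert a s ha IH =>
      rw [Finset.sup_insert, Submodule.disjoint_def]
      intro x hx0 hxr
      obtain ⟨f, hf, w, hw, hfw⟩ := Submodule.mem_sup.mp hxr
      have hxa : x ∈ P a.1 := hPmono _ _ (hd₀le a.1 a.2) (hDlt a.1 a.2) hx0
      have hwa : w ∈ P a.1 :=
        Finset.sup_le (fun y hy => hFle y a.1 a.2 (Subtype.coe_lt_coe.mpr (ha y hy))) hw
      have hfa : f ∈ P a.1 := by
        have hfx : f = x - w := by rw [← hfw]; abel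
        rw [hfx]; exact Submodule.sub_mem _ hxa hwa
      have hf0 : f = 0 := Submodule.disjoint_def.mp (hFdisj a) f hfa hf
      rw [hf0, zero_add] at hfw
      exact Submodule.disjoint_def.mp IH x hx0 (hfw ▸ hw)
  have hdisjF : ∀ (s : Finset ↥D) (γ : ↥D), γ ∉ s → Disjoint (F γ) (P d₀ ⊔ s.sup F) := by
    intro s
    induction s using Finset.induction_on_max with
    | empty =>
      intro γ _
      rw [Finset.sup_empty, sup_bot_eq]
      exact (hFdisj γ).symm.mono_right (hPmono _ _ (hd₀le γ.1 γ.2) (hDlt γ.1 γ.2))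
    | insert a s ha IH =>
      intro γ hγ
      have hγa : γ ≠ a := by rintro rfl; exact hγ (Finset.mem_insert_self γ s)
      have hγs : γ ∉ s := fun h => hγ (Finset.mem_insert_of_mem h)
      rcases lt_or_gt_of_ne hγa with hlt | hgt
      · rw [Submodule.disjoint_def]
        intro x hxF hxr
        rw [Finset.sup_insert] at hxr
        have hxr' : x ∈ (P d₀ ⊔ s.sup F) ⊔ F a := by
          rwa [sup_comm (F a) (s.sup F), ← sup_assoc] at hxr
        obtain ⟨w, hw, f, hf, hwf⟩ := Submodule.mem_sup.mp hxr'
        have hxa : x ∈ P a.1 := hFle γ a.1 a.2 (Subtype.coe_lt_coe.mpr hlt) hxF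
        have hwa : w ∈ P a.1 :=
          hWle s a.1 a.2 (fun y hy => Subtype.coe_lt_coe.mpr (ha y hy)) hw
        have hfa : f ∈ P a.1 := by
          have hfx : f = x - w := by rw [← hwf]; abel
          rw [hfx]; exact Submodule.sub_mem _ hxa hwa
        have hf0 : f = 0 := Submodule.disjoint_def.mp (hFdisj a) f hfa hf
        rw [hf0, add_zero] at hwf
        exact Submodule.disjoint_def.mp (IH γ hγs) x hxF (hwf ▸ hw)
      · refine (hFdisj γ).symm.mono_right ?_
        refine sup_le (hPmono _ _ (hd₀le γ.1 γ.2) (hDlt γ.1 γ.2)) ?_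
        rw [Finset.sup_insert]
        refine sup_le (hFle a γ.1 γ.2 (Subtype.coe_lt_coe.mpr hgt)) ?_
        exact Finset.sup_le fun y hy =>
          hFle y γ.1 γ.2 (Subtype.coe_lt_coe.mpr (lt_trans (ha y hy) hgt))
  -- the internal direct sum
  set G : Option ↥D → Submodule ℤ A := fun o => o.elim (P d₀) F with hGdef
  have hGtop : ⨆ i, G i = ⊤ := by
    rw [iSup_option]
    exact hTop
  have hGindep : iSupIndep G := by
    intro i
    rw [Submodule.disjoint_def]
    intro x hxi hxr
    rw [iSup_subtype'] at hxr
    obtain ⟨t, hxt⟩ := Submodule.mem_iSup_iff_exists_finset.mp hxr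
    set u : Finset ↥D := Finset.eraseNone (t.image Subtype.val) with hu
    cases i with
    | none =>
      have hbound : (⨆ j ∈ t, G j.1) ≤ u.sup F := by
        refine iSup₂_le fun j hj => ?_
        match j, hj with
        | ⟨none, hne⟩, hj => exact absurd rfl hne
        | ⟨some γ, hne⟩, hj =>
          show F γ ≤ u.sup F
          refine Finset.le_sup ?_
          rw [hu, Finset.mem_eraseNone]
          exact Finset.mem_image.mpr ⟨⟨some γ, hne⟩, hj, rfl⟩
      exact Submodule.disjoint_def.mp (hdisj0 u) x hxi (hbound hxt)
    | some γ =>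
      have hbound : (⨆ j ∈ t, G j.1) ≤ P d₀ ⊔ u.sup F := by
        refine iSup₂_le fun j hj => ?_
        match j, hj with
        | ⟨none, hne⟩, hj => exact le_sup_left
        | ⟨some γ', hne⟩, hj =>
          refine le_trans (?_ : F γ' ≤ u.sup F) le_sup_right
          refine Finset.le_sup ?_
          rw [hu, Finset.mem_eraseNone]
          exact Finset.mem_image.mpr ⟨⟨some γ', hne⟩, hj, rfl⟩
      have hγu : γ ∉ u := by
        rw [hu, Finset.mem_eraseNone]
        intro hmem
        obtain ⟨j, hjt, hj⟩ := Finset.mem_image.mp hmem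
        exact j.2 hj
      exact Submodule.disjoint_def.mp (hdisjF u γ hγu) x hxi (hbound hxt)
  have hInternal : DirectSum.IsInternal G :=
    DirectSum.isInternal_submodule_of_iSupIndep_of_iSup_eq_top hGindep hGtop
  have hGfree : ∀ i, Module.Free ℤ (G i) := by
    rintro (_ | γ)
    · exact hPfree d₀ hd₀D
    · exact hFfree γ
  exact Module.Free.of_basis (hInternal.collectedBasis
    (fun i => @Module.Free.chooseBasis ℤ ↥(G i) _ _ _ (hGfree i)))

set_option maxHeartbeats 1600000 in
theorem bwd (κ : Cardinal.{u}) (hreg : κ.IsRegular) (hunc : Cardinal.aleph0 < κ)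
    (A : Type u) [AddCommGroup A] (hcard : Cardinal.mk A = κ)
    (hkfree : IsKappaFree κ A)
    (H : ∀ C : Ordinal.{u} → AddSubgroup A,
        (∀ α < κ.ord, Cardinal.mk (C α) < κ) →
        (∀ α β, α ≤ β → β < κ.ord → C α ≤ C β) →
        (∀ β < κ.ord, Order.IsSuccLimit β → C β = ⨆ α < β, C α) →
        (⨆ α < κ.ord, C α) = ⊤ →
        ∃ D : Set Ordinal,
          IsClubIn D κ.ord ∧ ∀ α ∈ D, IsKappaFree κ (A ⧸ C α)) :
    Module.Free ℤ A := by
  classical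
  have hκ0 : 0 < κ.ord := by
    rw [Cardinal.lt_ord]; simpa using hreg.pos
  have hordlim : Order.IsSuccLimit κ.ord := Cardinal.isSuccLimit_ord hreg.aleph0_le
  obtain ⟨g⟩ := Cardinal.eq.mp (by rw [Cardinal.mk_ord_toType, hcard] :
    #(κ.ord.ToType) = #A)
  set idx : κ.ord.ToType → Ordinal := fun x => ((Ordinal.ToType.mk (o := κ.ord)).symm x).1
    with hidxdef
  have hidx : ∀ x, idx x < κ.ord := fun x => ((Ordinal.ToType.mk (o := κ.ord)).symm x).2
  set P : Ordinal → Submodule ℤ A := fun α => Submodule.span ℤ (⇑g '' {x | idx x < α})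
    with hPdef
  set C : Ordinal → AddSubgroup A := fun α => AddSubgroup.toIntSubmodule.symm (P α)
    with hCdef
  have hCP : ∀ α, AddSubgroup.toIntSubmodule (C α) = P α := by
    intro α; rw [hCdef]; exact AddSubgroup.toIntSubmodule.apply_symm_apply (P α)
  have hCmem : ∀ α (x : A), x ∈ C α ↔ x ∈ P α := by
    intro α x
    constructor
    · intro hx
      rw [← hCP α]
      exact hx
    · intro hx
      have : x ∈ AddSubgroup.toIntSubmodule (C α) := by rw [hCP α]; exact hx
      exact this
  -- cardinality
  have hCcard : ∀ α < κ.ord, #(C α) < κ := by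
    intro α hα
    have e1 : #(C α) = #(P α) := by
      rw [← hCP α]; exact Cardinal.mk_congr (myGrpEquiv (C α)).toEquiv
    rw [e1]
    refine lt_of_le_of_lt (myMkSpanLe _) (max_lt ?_ hunc)
    refine lt_of_le_of_lt Cardinal.mk_image_le ?_
    have hsmall : #{x : κ.ord.ToType | idx x < α} = α.card := by
      have e2 : {x : κ.ord.ToType | idx x < α} ≃ {y : Set.Iio κ.ord // y.1 < α} := by
        refine (Equiv.subtypeEquiv (Ordinal.ToType.mk (o := κ.ord)).toEquiv ?_).symm
        intro y
        simp [hidxdef]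
      have e3 : {y : Set.Iio κ.ord // y.1 < α} ≃ ↥(Set.Iio α) :=
        { toFun := fun y => ⟨y.1.1, y.2⟩
          invFun := fun z => ⟨⟨z.1, lt_trans z.2 hα⟩, z.2⟩
          left_inv := fun y => rfl
          right_inv := fun z => rfl }
      have h4 : Cardinal.lift.{u+1} #{x : κ.ord.ToType | idx x < α}
          = Cardinal.lift.{u} #(↥(Set.Iio α)) :=
        Cardinal.lift_mk_eq'.mpr ⟨e2.trans e3⟩
      rw [Ordinal.mk_Iio_ordinal] at h4
      simp only [Cardinal.lift_lift, Cardinal.lift_id] at h4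
      exact Cardinal.lift_injective h4
    rw [hsmall]
    exact Cardinal.lt_ord.mp hα
  -- monotonicity
  have hPmono : ∀ α β, α ≤ β → P α ≤ P β := by
    intro α β h
    exact Submodule.span_mono (Set.image_mono (fun x hx => Set.mem_setOf_eq ▸ lt_of_lt_of_le hx h))
  have hCmono : ∀ α β, α ≤ β → β < κ.ord → C α ≤ C β := by
    intro α β h _
    intro x hx
    exact (hCmem β x).mpr (hPmono α β h ((hCmem α x).mp hx))
  -- continuity
  have hCcont : ∀ β < κ.ord, Order.IsSuccLimit β → C β = ⨆ α < β, C α := by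
    intro β _ hβlim
    have hset : {x : κ.ord.ToType | idx x < β} = ⋃ α : Set.Iio β, {x | idx x < α.1} := by
      ext x
      simp only [Set.mem_setOf_eq, Set.mem_iUnion]
      constructor
      · intro h
        exact ⟨⟨idx x + 1, hβlim.succ_lt h⟩, Order.lt_succ _⟩
      · rintro ⟨α, hα⟩
        exact lt_trans hα α.2
    have hPcont : P β = ⨆ α : Set.Iio β, P α.1 := by
      rw [hPdef]
      simp only
      rw [hset, Set.image_iUnion, Submodule.span_iUnion]
    rw [hCdef]
    simp only
    rw [hPcont, myOrderIsoMapiSup AddSubgroup.toIntSubmodule.symm, iSup_subtype']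
    rfl
  -- top
  have hCtop : (⨆ α < κ.ord, C α) = ⊤ := by
    rw [eq_top_iff]
    intro x _
    have h1 : x ∈ C (idx (g.symm x) + 1) := by
      rw [hCmem]
      refine Submodule.subset_span ?_
      exact ⟨g.symm x, Set.mem_setOf_eq ▸ Order.lt_succ _, g.apply_symm_apply x⟩
    exact (le_iSup₂ (f := fun α (_ : α < κ.ord) => C α) (idx (g.symm x) + 1)
      (hordlim.succ_lt (hidx (g.symm x)))) h1
  obtain ⟨D, ⟨hDsub, hDunb, hDclosed⟩, hDfree⟩ := H C hCcard hCmono hCcont hCtop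
  -- basic club facts
  have hDne : D.Nonempty := by
    obtain ⟨β, hβ, _⟩ := hDunb 0 hκ0; exact ⟨β, hβ⟩
  set d₀ : Ordinal := sInf D with hd₀def
  have hd₀D : d₀ ∈ D := csInf_mem hDne
  have hd₀le : ∀ β ∈ D, d₀ ≤ β := fun β hβ => csInf_le (OrderBot.bddBelow D) hβ
  have hDlt : ∀ β ∈ D, β < κ.ord := fun β hβ => hDsub hβ
  set nxt : Ordinal → Ordinal := fun β => sInf {γ | γ ∈ D ∧ β < γ} with hnxtdef
  have hnxt : ∀ β < κ.ord, nxt β ∈ D ∧ β < nxt β := by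
    intro β hβ
    have hne : {γ | γ ∈ D ∧ β < γ}.Nonempty := by
      obtain ⟨γ, hγD, hγ⟩ := hDunb (β + 1) (hordlim.succ_lt hβ)
      exact ⟨γ, hγD, lt_of_lt_of_le (Order.lt_succ β) hγ⟩
    exact csInf_mem hne
  have hnxtle : ∀ β γ, γ ∈ D → β < γ → nxt β ≤ γ := fun β γ hγD hβγ =>
    csInf_le (OrderBot.bddBelow _) ⟨hγD, hβγ⟩
  -- complements exist
  have hcompl : ∀ β ∈ D, ∃ F : Submodule ℤ A, Module.Free ℤ F ∧
      Disjoint (AddSubgroup.toIntSubmodule (C β)) F ∧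
      AddSubgroup.toIntSubmodule (C β) ⊔ F = AddSubgroup.toIntSubmodule (C (nxt β)) := by
    intro β hβD
    have hβκ := hDlt β hβD
    obtain ⟨hnxtD, hβnxt⟩ := hnxt β hβκ
    have hnxtκ := hDlt _ hnxtD
    set Pb := AddSubgroup.toIntSubmodule (C β) with hPb
    set Pn := AddSubgroup.toIntSubmodule (C (nxt β)) with hPn
    have hPbn : Pb ≤ Pn := AddSubgroup.toIntSubmodule.monotone (hCmono _ _ hβnxt.le hnxtκ)
    set p : Submodule ℤ ↥Pn := Submodule.comap Pn.subtype Pb with hp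
    set h : ↥Pn →ₗ[ℤ] (A ⧸ C β) := ((QuotientAddGroup.mk' (C β)).comp
      Pn.subtype.toAddMonoidHom).toIntLinearMap with hh
    have happ : ∀ x : ↥Pn, h x = QuotientAddGroup.mk' (C β) x.1 := fun x => rfl
    have hker : LinearMap.ker h = p := by
      ext x
      rw [LinearMap.mem_ker, happ, QuotientAddGroup.mk'_apply, QuotientAddGroup.eq_zero_iff]
      rw [hp, Submodule.mem_comap]
      exact (myMemToInt (C β) x.1).symm
    have hNcard : #(↥Pn) < κ := by
      rw [Cardinal.mk_congr (myGrpEquiv (C (nxt β))).toEquiv]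
      exact hCcard _ hnxtκ
    have hrangecard : #(LinearMap.range h) < κ :=
      lt_of_le_of_lt (Cardinal.mk_le_of_surjective (LinearMap.surjective_rangeRestrict h)) hNcard
    have hfreerange : Module.Free ℤ ↥(LinearMap.range h) := by
      have hB := hDfree β hβD ((LinearMap.range h).toAddSubgroup) (by
        rw [Cardinal.mk_congr (mySubEquiv _).toEquiv]; exact hrangecard)
      exact myFreeOfAddEquiv (mySubEquiv _) hB
    have hfreeQ : Module.Free ℤ (↥Pn ⧸ p) := by
      have e1 : (↥Pn ⧸ p) ≃ₗ[ℤ] ↥(LinearMap.range h) :=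
        (Submodule.quotEquivOfEq p (LinearMap.ker h) hker.symm).trans h.quotKerEquivRange
      exact Module.Free.of_equiv e1.symm
    haveI := hfreeQ
    obtain ⟨s, hs⟩ := Module.projective_lifting_property p.mkQ LinearMap.id
      (Submodule.mkQ_surjective p)
    have hsid : ∀ y : ↥Pn ⧸ p, p.mkQ (s y) = y := fun y => LinearMap.congr_fun hs y
    have hsinj : Function.Injective s := by
      intro x y hxy
      rw [← hsid x, ← hsid y, hxy]
    set q := LinearMap.range s with hq
    have hdisjpq : ∀ x : ↥Pn, x ∈ p → x ∈ q → x = 0 := by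
      rintro x hxp ⟨y, rfl⟩
      have h2 : p.mkQ (s y) = 0 := by
        rw [Submodule.mkQ_apply, Submodule.Quotient.mk_eq_zero]; exact hxp
      rw [hsid y] at h2
      rw [h2, map_zero]
    have hsuppq : ∀ x : ↥Pn, ∃ a ∈ p, ∃ c ∈ q, a + c = x := by
      intro x
      refine ⟨x - s (p.mkQ x), ?_, s (p.mkQ x), ⟨p.mkQ x, rfl⟩, by abel⟩
      rw [← Submodule.Quotient.mk_eq_zero, ← Submodule.mkQ_apply, map_sub, hsid, sub_self]
    set F := Submodule.map Pn.subtype q with hF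
    refine ⟨F, ?_, ?_, ?_⟩
    · have e2 : ↥q ≃ₗ[ℤ] ↥F := Submodule.equivMapOfInjective Pn.subtype Subtype.val_injective q
      have e3 : (↥Pn ⧸ p) ≃ₗ[ℤ] ↥q := LinearEquiv.ofInjective s hsinj
      exact Module.Free.of_equiv (e3.trans e2)
    · rw [Submodule.disjoint_def]
      rintro x hxPb ⟨w, hwq, rfl⟩
      have hwp : w ∈ p := Submodule.mem_comap.mpr hxPb
      rw [hdisjpq w hwp hwq, map_zero]
    · have hmap : Pb ⊔ F = Submodule.map Pn.subtype (p ⊔ q) := by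
        rw [Submodule.map_sup]
        congr 1
        rw [hp, Submodule.map_comap_subtype]
        exact (inf_eq_right.mpr hPbn).symm
      have hpq : p ⊔ q = ⊤ := by
        rw [eq_top_iff]
        intro x _
        obtain ⟨a, ha, c, hc, hac⟩ := hsuppq x
        exact hac ▸ Submodule.add_mem_sup ha hc
      rw [hmap, hpq, Submodule.map_top, Submodule.range_subtype]
  choose Fc hFcfree hFcdisj hFcsup using hcompl
  exact freeOfFiltration κ hreg hunc D hDsub hDunb hDclosed
    (fun α => AddSubgroup.toIntSubmodule (C α))
    (fun α β h hβ => AddSubgroup.toIntSubmodule.monotone (hCmono α β h hβ))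
    (by
      intro β hβκ hβlim x hx
      have hx' : x ∈ C β := hx
      rw [hCcont β hβκ hβlim, iSup_subtype'] at hx'
      have hne2 : Nonempty (Set.Iio β) := ⟨⟨0, hβlim.pos⟩⟩
      have hdir : Directed (· ≤ ·) (fun α : Set.Iio β => C α.1) := by
        intro y z
        rcases le_total y.1 z.1 with h | h
        · exact ⟨z, hCmono _ _ h (lt_trans z.2 hβκ), le_rfl⟩
        · exact ⟨y, le_rfl, hCmono _ _ h (lt_trans y.2 hβκ)⟩
      obtain ⟨⟨α, hα⟩, hmemα⟩ := (AddSubgroup.mem_iSup_of_directed hdir).mp hx'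
      exact ⟨α, hα, hmemα⟩)
    (by
      intro x
      refine ⟨idx (g.symm x) + 1, hordlim.succ_lt (hidx (g.symm x)), ?_⟩
      show x ∈ C (idx (g.symm x) + 1)
      rw [hCmem]
      exact Submodule.subset_span ⟨g.symm x, Set.mem_setOf_eq ▸ Order.lt_succ _,
        g.apply_symm_apply x⟩)
    (fun β hβ => myFreeOfAddEquiv (myGrpEquiv (C β)).symm (hkfree _ (hCcard _ (hDlt β hβ))))
    (fun γ => Fc γ.1 γ.2)
    (fun γ => hFcfree γ.1 γ.2)
    (fun γ => hFcdisj γ.1 γ.2)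
    (fun γ => hFcsup γ.1 γ.2)

/-- For an uncountable regular cardinal `κ` and a `κ`-free Abelian group `A`
of cardinality `κ`, `A` is free if and only if for every representation of
`A` as the union of a continuous increasing chain of subgroups of cardinality
`< κ` indexed by the ordinals below `κ`, the set of indices `α` with `A ⧸ A α`
`κ`-free contains a club. -/
theorem free_iff_club_of_kappa_free
    (κ : Cardinal) (hreg : κ.IsRegular) (hunc : Cardinal.aleph0 < κ)
    (A : Type*) [AddCommGroup A] (hcard : Cardinal.mk A = κ)
    (hkfree : IsKappaFree κ A) :
    Module.Free ℤ A ↔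
      ∀ C : Ordinal → AddSubgroup A,
        (∀ α < κ.ord, Cardinal.mk (C α) < κ) →
        (∀ α β, α ≤ β → β < κ.ord → C α ≤ C β) →
        (∀ β < κ.ord, Order.IsSuccLimit β → C β = ⨆ α < β, C α) →
        (⨆ α < κ.ord, C α) = ⊤ →
        ∃ D : Set Ordinal,
          IsClubIn D κ.ord ∧
          ∀ α ∈ D, IsKappaFree κ (A ⧸ C α) := by
  constructor
  · intro hfree C hc hm hco ht
    exact fwd κ hreg hunc A hkfree hfree C hc hm hco ht
  · intro H
    exact bwd κ hreg hunc A hcard hkfree H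
end

section
/- The additive subgroup of the Banach space L^∞([0,1]) (with Lebesgue measure) consisting of (equivalence classes of) essentially bounded measurable functions that are almost everywhere integer-valued is a free Abelian group, i.e., a free ℤ-module. -/
open MeasureTheory Set symmDiff

namespace IVFree

abbrev X : Type := Set.Icc (0:ℝ) 1
noncomputable abbrev μ : Measure X := volume

abbrev MS : Type := {E : Set X // MeasurableSet E}

def memS (x : MS → Bool) : Prop :=
  (∀ E F : MS, x ⟨E.1 ∩ F.1, E.2.inter F.2⟩ = (x E && x F)) ∧
  (∀ E : MS, x ⟨E.1ᶜ, E.2.compl⟩ = !x E) ∧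
  (∀ E : MS, μ E.1 = 0 → x E = false) ∧
  (x ⟨Set.univ, MeasurableSet.univ⟩ = true)

variable {x : MS → Bool}

lemma x_congr {E F : MS} (h : E.1 = F.1) : x E = x F := congrArg x (Subtype.ext h)

lemma x_inter (hx : memS x) (E F : MS) :
    x ⟨E.1 ∩ F.1, E.2.inter F.2⟩ = (x E && x F) := hx.1 E F

lemma x_compl (hx : memS x) (E : MS) : x ⟨E.1ᶜ, E.2.compl⟩ = !x E := hx.2.1 E

lemma x_null (hx : memS x) {E : MS} (h : μ E.1 = 0) : x E = false := hx.2.2.1 E h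

lemma x_univ (hx : memS x) : x ⟨Set.univ, MeasurableSet.univ⟩ = true := hx.2.2.2

lemma x_union (hx : memS x) (E F : MS) :
    x ⟨E.1 ∪ F.1, E.2.union F.2⟩ = (x E || x F) := by
  have h1 : (E.1 ∪ F.1 : Set X) = (E.1ᶜ ∩ F.1ᶜ)ᶜ := by
    simp [Set.compl_inter]
  calc x ⟨E.1 ∪ F.1, E.2.union F.2⟩
      = x ⟨(E.1ᶜ ∩ F.1ᶜ)ᶜ, ((E.2.compl).inter (F.2.compl)).compl⟩ := x_congr (x := x) h1
    _ = !x ⟨E.1ᶜ ∩ F.1ᶜ, (E.2.compl).inter (F.2.compl)⟩ :=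
        x_compl hx ⟨E.1ᶜ ∩ F.1ᶜ, (E.2.compl).inter (F.2.compl)⟩
    _ = !(x ⟨E.1ᶜ, E.2.compl⟩ && x ⟨F.1ᶜ, F.2.compl⟩) := by
        rw [x_inter hx ⟨E.1ᶜ, E.2.compl⟩ ⟨F.1ᶜ, F.2.compl⟩]
    _ = !((!x E) && (!x F)) := by rw [x_compl hx, x_compl hx]
    _ = (x E || x F) := by cases x E <;> cases x F <;> rfl

lemma x_subset (hx : memS x) {E F : MS} (h : E.1 ⊆ F.1) (hE : x E = true) : x F = true := by
  have h1 : E.1 = E.1 ∩ F.1 := (Set.inter_eq_left.mpr h).symm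
  have h2 : x E = (x E && x F) := (x_congr (x := x) h1).trans (x_inter hx E F)
  rw [hE] at h2
  simpa using h2.symm

lemma x_conull (hx : memS x) {E : MS} (h : μ E.1ᶜ = 0) : x E = true := by
  have h1 : x ⟨E.1ᶜ, E.2.compl⟩ = false := x_null hx h
  rw [x_compl hx] at h1
  simpa using h1

lemma x_disjoint (hx : memS x) {E F : MS} (h : μ (E.1 ∩ F.1) = 0) (hE : x E = true)
    (hF : x F = true) : False := by
  have h1 : x ⟨E.1 ∩ F.1, E.2.inter F.2⟩ = false := x_null hx h
  rw [x_inter hx, hE, hF] at h1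
  simp at h1

lemma x_ae (hx : memS x) {E F : MS} (h : E.1 =ᵐ[μ] F.1) : x E = x F := by
  have hN : μ (E.1 ∆ F.1) = 0 := by
    rw [MeasureTheory.ae_eq_set] at h
    rw [Set.symmDiff_def]
    exact measure_union_null h.1 h.2
  set N : MS := ⟨E.1 ∆ F.1, E.2.symmDiff F.2⟩ with hNdef
  set Nc : MS := ⟨N.1ᶜ, N.2.compl⟩ with hNcdef
  have hc : x Nc = true := by
    rw [hNcdef, x_compl hx, x_null hx hN]; rfl
  have h1 : E.1 ∩ Nc.1 = F.1 ∩ Nc.1 := by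
    ext t
    simp only [hNcdef, hNdef, Set.mem_inter_iff, Set.mem_compl_iff, Set.mem_symmDiff]
    constructor
    · rintro ⟨ht, hn⟩; exact ⟨by by_contra hf; exact hn (Or.inl ⟨ht, hf⟩), hn⟩
    · rintro ⟨ht, hn⟩; exact ⟨by by_contra hf; exact hn (Or.inr ⟨ht, hf⟩), hn⟩
  calc x E = (x E && x Nc) := by rw [hc, Bool.and_true]
    _ = x ⟨E.1 ∩ Nc.1, E.2.inter Nc.2⟩ := (x_inter hx E Nc).symm
    _ = x ⟨F.1 ∩ Nc.1, F.2.inter Nc.2⟩ := x_congr (x := x) h1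
    _ = (x F && x Nc) := x_inter hx F Nc
    _ = x F := by rw [hc, Bool.and_true]


/-- The level set `{g = n}` as a measurable set. -/
def lev (g : X → ℝ) (hg : Measurable g) (n : ℤ) : MS :=
  ⟨{t | g t = (n : ℝ)}, hg (measurableSet_singleton (n : ℝ))⟩

lemma x_lev_unique (hx : memS x) {g : X → ℝ} {hg : Measurable g} {n m : ℤ}
    (hn : x (lev g hg n) = true) (hm : x (lev g hg m) = true) : n = m := by
  by_contra hne
  apply x_disjoint hx (E := lev g hg n) (F := lev g hg m) _ hn hm
  have : (lev g hg n).1 ∩ (lev g hg m).1 = ∅ := by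
    ext t
    simp only [lev, Set.mem_inter_iff, Set.mem_setOf_eq, Set.mem_empty_iff_false, iff_false,
      not_and]
    intro h1 h2
    exact hne (by exact_mod_cast h1.symm.trans h2)
  rw [this]
  exact measure_empty

open Classical in
/-- The integer value that the state `x` assigns to the function `g`. -/
noncomputable def sel (x : MS → Bool) (g : X → ℝ) (hg : Measurable g) : ℤ :=
  if h : ∃ n : ℤ, x (lev g hg n) = true then h.choose else 0

lemma sel_eq (hx : memS x) {g : X → ℝ} {hg : Measurable g} {n : ℤ}
    (hn : x (lev g hg n) = true) : sel x g hg = n := by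
  rw [sel, dif_pos ⟨n, hn⟩]
  exact x_lev_unique hx (⟨n, hn⟩ : ∃ n : ℤ, x (lev g hg n) = true).choose_spec hn

/-- The union of level sets over a finset, as a measurable set. -/
def bU (g : X → ℝ) (hg : Measurable g) (s : Finset ℤ) : MS :=
  ⟨⋃ n ∈ s, (lev g hg n).1,
    MeasurableSet.biUnion s.countable_toSet (fun n _ => (lev g hg n).2)⟩

lemma x_bU_insert (hx : memS x) (g : X → ℝ) (hg : Measurable g) (a : ℤ) (t : Finset ℤ) :
    x (bU g hg (insert a t)) = (x (lev g hg a) || x (bU g hg t)) := by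
  have h : (bU g hg (insert a t)).1 = (lev g hg a).1 ∪ (bU g hg t).1 := by
    simp [bU, Finset.set_biUnion_insert]
  exact (x_congr (x := x) h (F := ⟨(lev g hg a).1 ∪ (bU g hg t).1,
    (lev g hg a).2.union (bU g hg t).2⟩)).trans (x_union hx (lev g hg a) (bU g hg t))

lemma x_bU (hx : memS x) {g : X → ℝ} (hg : Measurable g) (s : Finset ℤ)
    (hG : x (bU g hg s) = true) : ∃ n ∈ s, x (lev g hg n) = true := by
  classical
  induction s using Finset.induction_on with
  | empty =>
    exfalso
    have : x (bU g hg ∅) = false := by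
      apply x_null hx
      simp [bU]
    rw [hG] at this; simp at this
  | insert _ _ hat ih =>
    rw [x_bU_insert hx] at hG
    rcases Bool.or_eq_true_iff.mp hG with h | h
    · exact ⟨_, Finset.mem_insert_self _ _, h⟩
    · obtain ⟨n, hn, hxn⟩ := ih h
      exact ⟨n, Finset.mem_insert_of_mem hn, hxn⟩

/-- From a finite a.e. covering by level sets, the state selects one of them. -/
lemma exists_x_lev (hx : memS x) {g : X → ℝ} (hg : Measurable g) {s : Finset ℤ}
    (hae : ∀ᵐ t ∂μ, ∃ n ∈ s, g t = (n : ℝ)) : ∃ n ∈ s, x (lev g hg n) = true := by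
  apply x_bU hx hg s
  apply x_conull hx
  have hsub : (bU g hg s).1ᶜ ⊆ {t | ¬ ∃ n ∈ s, g t = (n : ℝ)} := by
    intro t ht hex
    obtain ⟨n, hns, hgn⟩ := hex
    apply ht
    simp only [bU, Set.mem_iUnion, lev, Set.mem_setOf_eq]
    exact ⟨n, hns, hgn⟩
  exact measure_mono_null hsub (by simpa [MeasureTheory.ae_iff] using hae)


/-- A measurable representative of an `L^∞` element. -/
noncomputable def rep (f : Lp ℝ ⊤ μ) : X → ℝ := (Lp.aestronglyMeasurable f).mk f

lemma rep_measurable (f : Lp ℝ ⊤ μ) : Measurable (rep f) :=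
  (Lp.aestronglyMeasurable f).stronglyMeasurable_mk.measurable

lemma rep_ae (f : Lp ℝ ⊤ μ) : rep f =ᵐ[μ] f :=
  ((Lp.aestronglyMeasurable f).ae_eq_mk).symm

lemma x_lev_ae_congr (hx : memS x) {g g' : X → ℝ} (hg : Measurable g) (hg' : Measurable g')
    (h : g =ᵐ[μ] g') (n : ℤ) : x (lev g hg n) = x (lev g' hg' n) := by
  apply x_ae hx
  filter_upwards [h] with t ht
  show (g t = (n : ℝ)) = (g' t = (n : ℝ))
  rw [ht]

lemma sel_congr_ae (hx : memS x) {g g' : X → ℝ} (hg : Measurable g) (hg' : Measurable g')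
    (h : g =ᵐ[μ] g') : sel x g hg = sel x g' hg' := by
  by_cases hex : ∃ n : ℤ, x (lev g hg n) = true
  · obtain ⟨n, hn⟩ := hex
    rw [sel_eq hx hn, sel_eq hx ((x_lev_ae_congr hx hg hg' h n).symm.trans hn)]
  · have hex' : ¬ ∃ n : ℤ, x (lev g' hg' n) = true := by
      rintro ⟨n, hn⟩
      exact hex ⟨n, (x_lev_ae_congr hx hg hg' h n).trans hn⟩
    rw [sel, sel, dif_neg hex, dif_neg hex']

lemma sel_add (hx : memS x) {g g' : X → ℝ} (hg : Measurable g) (hg' : Measurable g')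
    {n m : ℤ} (hn : x (lev g hg n) = true) (hm : x (lev g' hg' m) = true) :
    sel x (g + g') (hg.add hg') = n + m := by
  apply sel_eq hx
  have hsub : (lev g hg n).1 ∩ (lev g' hg' m).1 ⊆ (lev (g + g') (hg.add hg') (n + m)).1 := by
    rintro t ⟨h1, h2⟩
    show g t + g' t = ((n + m : ℤ) : ℝ)
    push_cast
    rw [show g t = (n:ℝ) from h1, show g' t = (m:ℝ) from h2]
  apply x_subset hx (E := ⟨(lev g hg n).1 ∩ (lev g' hg' m).1,
    (lev g hg n).2.inter (lev g' hg' m).2⟩) hsub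
  rw [x_inter hx (lev g hg n) (lev g' hg' m), hn, hm]
  rfl

/-- Every element of `L^∞` which is a.e. integer-valued takes a.e. values in a fixed finset. -/
lemma exists_finset (f : Lp ℝ ⊤ μ)
    (hf : ∀ᵐ t ∂μ, ∃ n : ℤ, f t = (n : ℝ)) :
    ∃ s : Finset ℤ, ∀ᵐ t ∂μ, ∃ n ∈ s, rep f t = (n : ℝ) := by
  have hbdd : ∀ᵐ t ∂μ, ‖f t‖₊ ≤ eLpNormEssSup (f : X → ℝ) μ :=
    enorm_ae_le_eLpNormEssSup (f : X → ℝ) μ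
  have hlt : eLpNormEssSup (f : X → ℝ) μ < ⊤ := by
    have := Lp.eLpNorm_lt_top f
    rwa [eLpNorm_exponent_top] at this
  set C : ℝ := (eLpNormEssSup (f : X → ℝ) μ).toReal with hC
  refine ⟨Finset.Icc (-⌈C⌉) ⌈C⌉, ?_⟩
  filter_upwards [hf, hbdd, rep_ae f] with t ⟨n, hn⟩ hb hr
  refine ⟨n, ?_, by rw [hr, hn]⟩
  have habs : |(n : ℝ)| ≤ C := by
    rw [← hn]
    have : ‖f t‖ ≤ C := by
      have := ENNReal.toReal_mono hlt.ne hb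
      simpa using this
    simpa [Real.norm_eq_abs] using this
  have h1 : (n : ℝ) ≤ C := le_trans (le_abs_self _) habs
  have h2 : -C ≤ (n : ℝ) := neg_le_of_neg_le (le_trans (neg_le_abs _) habs)
  rw [Finset.mem_Icc]
  constructor
  · have : ((-⌈C⌉ : ℤ) : ℝ) ≤ (n : ℝ) := by
      push_cast
      exact le_trans (by simpa using neg_le_neg (Int.le_ceil C)) h2
    exact_mod_cast this
  · have : (n : ℝ) ≤ ((⌈C⌉ : ℤ) : ℝ) := le_trans h1 (Int.le_ceil C)
    exact_mod_cast this


/-- The Stone space of the measure algebra: the set of Boolean states. -/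
def S : Set (MS → Bool) := {x | memS x}

lemma isClosed_S : IsClosed S := by
  have hand : Continuous fun p : Bool × Bool => (p.1 && p.2) := continuous_of_discreteTopology
  have hnot : Continuous fun b : Bool => !b := continuous_of_discreteTopology
  have h1 : IsClosed {x : MS → Bool |
      ∀ E F : MS, x ⟨E.1 ∩ F.1, E.2.inter F.2⟩ = (x E && x F)} := by
    rw [Set.setOf_forall]
    refine isClosed_iInter fun E => ?_
    rw [Set.setOf_forall]
    refine isClosed_iInter fun F => ?_
    have hc0 := hand.comp ((continuous_apply (A := fun _ : MS => Bool) E).prodMk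
      (continuous_apply (A := fun _ : MS => Bool) F))
    have hc : Continuous fun x : MS → Bool => (x E && x F) := hc0
    exact isClosed_eq (continuous_apply _) hc
  have h2 : IsClosed {x : MS → Bool | ∀ E : MS, x ⟨E.1ᶜ, E.2.compl⟩ = !x E} := by
    rw [Set.setOf_forall]
    refine isClosed_iInter fun E => ?_
    exact isClosed_eq (continuous_apply _) (hnot.comp (continuous_apply E))
  have h3 : IsClosed {x : MS → Bool | ∀ E : MS, μ E.1 = 0 → x E = false} := by
    rw [Set.setOf_forall]
    refine isClosed_iInter fun E => ?_
    by_cases h : μ E.1 = 0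
    · simp only [h, forall_true_left]
      exact isClosed_eq (continuous_apply _) continuous_const
    · have : {x : MS → Bool | μ E.1 = 0 → x E = false} = Set.univ := by
        ext y; simp [h]
      rw [this]; exact isClosed_univ
  have h4 : IsClosed {x : MS → Bool | x ⟨Set.univ, MeasurableSet.univ⟩ = true} :=
    isClosed_eq (continuous_apply _) continuous_const
  exact ((h1.inter (h2.inter (h3.inter h4))) : _)

instance : CompactSpace S := isCompact_iff_compactSpace.mp (isClosed_S.isCompact)

/-- Existence of states: every set of positive measure is charged by some state. -/
lemma exists_state {E : MS} (hE : μ E.1 ≠ 0) : ∃ x : S, x.1 E = true := by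
  classical
  have hres : (μ.restrict E.1) ≠ 0 := by
    intro h
    apply hE
    have := congrArg (fun m : Measure X => m Set.univ) h
    simpa [Measure.restrict_apply_univ] using this
  have : (ae (μ.restrict E.1)).NeBot := ae_neBot.mpr hres
  let U : Ultrafilter X := Ultrafilter.of (ae (μ.restrict E.1))
  have hle : (↑U : Filter X) ≤ ae (μ.restrict E.1) := Ultrafilter.of_le _
  have hle' : ∀ {F : Set X}, F ∈ ae (μ.restrict E.1) → F ∈ U := fun h => hle h
  let x : MS → Bool := fun F => decide (F.1 ∈ U)
  have hnull : ∀ F : MS, μ F.1 = 0 → x F = false := by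
    intro F hF
    have h1 : F.1ᶜ ∈ ae (μ.restrict E.1) := by
      rw [mem_ae_iff, compl_compl]
      have hle2 : μ.restrict E.1 F.1 ≤ μ F.1 := Measure.restrict_le_self F.1
      exact le_antisymm (hle2.trans hF.le) (zero_le)
    have h2 : F.1ᶜ ∈ U := hle' h1
    have h3 : F.1 ∉ U := Ultrafilter.compl_mem_iff_notMem.mp h2
    simpa [x] using h3
  have hmem : memS x := by
    refine ⟨?_, ?_, hnull, ?_⟩
    · intro F G
      have hiff : F.1 ∩ G.1 ∈ U ↔ (F.1 ∈ U ∧ G.1 ∈ U) := by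
        constructor
        · intro hc
          exact ⟨Filter.mem_of_superset hc Set.inter_subset_left,
            Filter.mem_of_superset hc Set.inter_subset_right⟩
        · rintro ⟨hf, hg⟩
          exact Filter.inter_mem hf hg
      by_cases h1 : F.1 ∈ U <;> by_cases h2 : G.1 ∈ U <;> simp [x, h1, h2, hiff]
    · intro F
      by_cases h : F.1 ∈ U
      · have h' : F.1ᶜ ∉ U := fun hc => (Ultrafilter.compl_mem_iff_notMem.mp hc) h
        simp [x, h, h']
      · have h' : F.1ᶜ ∈ U := Ultrafilter.compl_mem_iff_notMem.mpr h
        simp [x, h, h']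
    · have : (Set.univ : Set X) ∈ U := Filter.univ_mem
      simp [x, this]
  refine ⟨⟨x, hmem⟩, ?_⟩
  have hEU : E.1 ∈ U := by
    apply hle'
    rw [mem_ae_iff, Measure.restrict_apply E.2.compl]
    simp
  simpa [x] using hEU


/-- The integer-valued property. -/
def IV (f : Lp ℝ ⊤ μ) : Prop := ∀ᵐ t ∂μ, ∃ n : ℤ, f t = (n : ℝ)

lemma IV.rep_ae_finset {f : Lp ℝ ⊤ μ} (hf : IV f) :
    ∃ s : Finset ℤ, ∀ᵐ t ∂μ, ∃ n ∈ s, rep f t = (n : ℝ) := exists_finset f hf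

/-- The value that a state assigns to an element of `L^∞`. -/
noncomputable def Phi (f : Lp ℝ ⊤ μ) (x : S) : ℤ := sel x.1 (rep f) (rep_measurable f)

lemma Phi_exists {f : Lp ℝ ⊤ μ} (hf : IV f) (x : S) :
    ∃ n : ℤ, x.1 (lev (rep f) (rep_measurable f) n) = true := by
  obtain ⟨s, hs⟩ := hf.rep_ae_finset
  obtain ⟨n, -, hn⟩ := exists_x_lev x.2 (rep_measurable f) hs
  exact ⟨n, hn⟩

lemma Phi_spec {f : Lp ℝ ⊤ μ} (hf : IV f) (x : S) :
    x.1 (lev (rep f) (rep_measurable f) (Phi f x)) = true := by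
  obtain ⟨n, hn⟩ := Phi_exists hf x
  have : Phi f x = n := sel_eq x.2 hn
  rw [this]; exact hn

lemma Phi_eq_iff {f : Lp ℝ ⊤ μ} (hf : IV f) (x : S) (n : ℤ) :
    Phi f x = n ↔ x.1 (lev (rep f) (rep_measurable f) n) = true := by
  constructor
  · rintro rfl; exact Phi_spec hf x
  · intro h; exact sel_eq x.2 h

lemma isLocallyConstant_Phi {f : Lp ℝ ⊤ μ} (hf : IV f) : IsLocallyConstant (Phi f) := by
  intro s
  have hfib : ∀ n : ℤ, Phi f ⁻¹' {n} =
      (fun x : S => x.1 (lev (rep f) (rep_measurable f) n)) ⁻¹' {true} := by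
    intro n
    ext x
    simp only [Set.mem_preimage, Set.mem_singleton_iff]
    exact Phi_eq_iff hf x n
  have : Phi f ⁻¹' s = ⋃ n ∈ s, Phi f ⁻¹' {n} := by
    ext x; simp
  rw [this]
  refine isOpen_biUnion fun n _ => ?_
  rw [hfib n]
  exact (((continuous_apply _).comp continuous_subtype_val).isOpen_preimage _ (isOpen_discrete _))

lemma Phi_add {f g : Lp ℝ ⊤ μ} (hf : IV f) (hg : IV g) (x : S) :
    Phi (f + g) x = Phi f x + Phi g x := by
  have h1 : rep (f + g) =ᵐ[μ] rep f + rep g := by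
    filter_upwards [rep_ae (f + g), rep_ae f, rep_ae g, Lp.coeFn_add f g] with t h1 h2 h3 h4
    simp only [Pi.add_apply, h1, h4, ← h2, ← h3]
  have h2 : Phi (f + g) x = sel x.1 (rep f + rep g)
      ((rep_measurable f).add (rep_measurable g)) :=
    sel_congr_ae x.2 (rep_measurable (f + g)) ((rep_measurable f).add (rep_measurable g)) h1
  rw [show Phi (f+g) x = sel x.1 (rep (f+g)) (rep_measurable (f+g)) from rfl] at h2
  rw [show Phi (f+g) x = sel x.1 (rep (f+g)) (rep_measurable (f+g)) from rfl, h2]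
  exact sel_add x.2 (rep_measurable f) (rep_measurable g) (Phi_spec hf x) (Phi_spec hg x)

lemma Phi_zero (x : S) : Phi (0 : Lp ℝ ⊤ μ) x = 0 := by
  have h1 : rep (0 : Lp ℝ ⊤ μ) =ᵐ[μ] (fun _ => (0:ℝ)) := by
    filter_upwards [rep_ae (0 : Lp ℝ ⊤ μ), Lp.coeFn_zero ℝ ⊤ μ] with t h1 h2
    rw [h1, h2]; rfl
  rw [Phi, sel_congr_ae x.2 (rep_measurable 0) measurable_const h1]
  apply sel_eq x.2 (n := 0)
  have h2 : (lev (fun _ => (0:ℝ)) measurable_const (0:ℤ)).1 = (Set.univ : Set X) := by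
    ext t; simp [lev]
  rw [x_congr (x := x.1) h2 (F := ⟨Set.univ, MeasurableSet.univ⟩)]
  exact x_univ x.2

lemma Phi_inj {f : Lp ℝ ⊤ μ} (hf : IV f) (h0 : ∀ x : S, Phi f x = 0) : f = 0 := by
  classical
  obtain ⟨s, hs⟩ := hf.rep_ae_finset
  by_contra hne
  have hae : ¬ (rep f =ᵐ[μ] (fun _ => (0:ℝ))) := by
    intro h
    apply hne
    apply (Lp.eq_zero_iff_ae_eq_zero).mpr
    filter_upwards [rep_ae f, h] with t h1 h2
    rw [← h1, h2]
    rfl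
  -- the set where `rep f` is nonzero has positive measure
  have hpos : μ {t | rep f t ≠ 0} ≠ 0 := by
    intro h
    apply hae
    rw [Filter.eventuallyEq_iff_exists_mem]
    exact ⟨{t | rep f t = 0}, by rwa [mem_ae_iff, show {t | rep f t = 0}ᶜ = {t | rep f t ≠ 0} from rfl],
      fun t ht => ht⟩
  -- it is a.e. covered by the nonzero level sets
  have hcover : μ ({t | rep f t ≠ 0} \ ⋃ n ∈ s.erase 0, (lev (rep f) (rep_measurable f) n).1) = 0 := by
    have hnull0 : μ {t | ¬ ∃ n ∈ s, rep f t = (n:ℝ)} = 0 := by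
      simpa [MeasureTheory.ae_iff] using hs
    refine measure_mono_null ?_ hnull0
    rintro t ⟨ht0, htU⟩
    rintro ⟨n, hns, hn⟩
    apply htU
    have hne0 : n ≠ 0 := by
      rintro rfl
      exact ht0 (by simpa using hn)
    exact Set.mem_biUnion (Finset.mem_coe.mpr (Finset.mem_erase.mpr ⟨hne0, hns⟩)) hn
  have hUnion : μ (⋃ n ∈ s.erase 0, (lev (rep f) (rep_measurable f) n).1) ≠ 0 := by
    intro h
    apply hpos
    have := measure_union_null hcover h
    refine measure_mono_null ?_ this
    intro t ht
    by_cases hU : t ∈ ⋃ n ∈ s.erase 0, (lev (rep f) (rep_measurable f) n).1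
    · exact Or.inr hU
    · exact Or.inl ⟨ht, hU⟩
  -- some nonzero level set has positive measure
  have hex : ∃ n ∈ s.erase 0, μ (lev (rep f) (rep_measurable f) n).1 ≠ 0 := by
    by_contra hall
    push_neg at hall
    apply hUnion
    refine measure_biUnion_null_iff (s.erase 0).countable_toSet |>.mpr ?_
    exact fun n hn => hall n hn
  obtain ⟨n, hns, hn⟩ := hex
  obtain ⟨x, hx⟩ := exists_state hn
  have : Phi f x = n := (Phi_eq_iff hf x n).mpr hx
  rw [h0 x] at this
  exact (Finset.mem_erase.mp hns).1 this.symm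


section FiniteOps

variable {ι : Type} [DecidableEq ι]

/-- Finite union of measurable sets indexed by a finset. -/
def fU (D : ι → MS) (t : Finset ι) : MS :=
  ⟨⋃ i ∈ t, (D i).1, MeasurableSet.biUnion t.countable_toSet (fun i _ => (D i).2)⟩

/-- Finite intersection of measurable sets indexed by a finset. -/
def fI (D : ι → MS) (t : Finset ι) : MS :=
  ⟨⋂ i ∈ t, (D i).1, MeasurableSet.biInter t.countable_toSet (fun i _ => (D i).2)⟩

lemma x_fU (hx : memS x) (D : ι → MS) (t : Finset ι) :
    x (fU D t) = true ↔ ∃ i ∈ t, x (D i) = true := by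
  induction t using Finset.induction_on with
  | empty =>
    constructor
    · intro hG
      have : x (fU D ∅) = false := by
        apply x_null hx; simp [fU]
      rw [hG] at this; simp at this
    · rintro ⟨i, hi, -⟩; simp at hi
  | insert _ _ hat ih =>
    rename_i a t
    have h : (fU D (insert a t)).1 = (D a).1 ∪ (fU D t).1 := by
      simp [fU, Finset.set_biUnion_insert]
    rw [(x_congr (x := x) h (F := ⟨(D a).1 ∪ (fU D t).1, (D a).2.union (fU D t).2⟩)),
      x_union hx (D a) (fU D t)]
    constructor
    · intro hor
      rcases Bool.or_eq_true_iff.mp hor with h | h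
      · exact ⟨a, Finset.mem_insert_self _ _, h⟩
      · obtain ⟨i, hi, hxi⟩ := ih.mp h
        exact ⟨i, Finset.mem_insert_of_mem hi, hxi⟩
    · rintro ⟨i, hi, hxi⟩
      rcases Finset.mem_insert.mp hi with rfl | hi
      · rw [hxi]; rfl
      · rw [ih.mpr ⟨i, hi, hxi⟩]
        simp

lemma x_fI (hx : memS x) (D : ι → MS) (t : Finset ι) :
    x (fI D t) = true ↔ ∀ i ∈ t, x (D i) = true := by
  induction t using Finset.induction_on with
  | empty =>
    constructor
    · intro _ i hi; simp at hi
    · intro _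
      have h : (fI D ∅).1 = (Set.univ : Set X) := by simp [fI]
      rw [(x_congr (x := x) h (F := ⟨Set.univ, MeasurableSet.univ⟩))]
      exact x_univ hx
  | insert _ _ hat ih =>
    rename_i a t
    have h : (fI D (insert a t)).1 = (D a).1 ∩ (fI D t).1 := by
      simp [fI, Finset.set_biInter_insert]
    rw [(x_congr (x := x) h (F := ⟨(D a).1 ∩ (fI D t).1, (D a).2.inter (fI D t).2⟩)),
      x_inter hx (D a) (fI D t)]
    rw [Bool.and_eq_true]
    constructor
    · rintro ⟨h1, h2⟩ i hi
      rcases Finset.mem_insert.mp hi with rfl | hi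
      · exact h1
      · exact ih.mp h2 i hi
    · intro hall
      exact ⟨hall a (Finset.mem_insert_self _ _), ih.mpr fun i hi =>
        hall i (Finset.mem_insert_of_mem hi)⟩

end FiniteOps

/-- Every clopen subset of the state space is a basic set. -/
lemma exists_basic {C : Set S} (hC : IsClopen C) :
    ∃ E : MS, C = {y : S | y.1 E = true} := by
  classical
  -- Step 1: basic open neighbourhoods inside C
  have hnbhd : ∀ x : S, x ∈ C → ∃ t : Finset MS,
      ∀ y : S, (∀ i ∈ t, y.1 i = x.1 i) → y ∈ C := by
    intro x hxC
    obtain ⟨V, hV, hVC⟩ := isOpen_induced_iff.mp hC.2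
    have hxV : x.1 ∈ V := by rw [← hVC] at hxC; exact hxC
    obtain ⟨I, u, hIu, hpi⟩ := isOpen_pi_iff.mp hV x.1 hxV
    refine ⟨I, fun y hy => ?_⟩
    have : y.1 ∈ V := by
      apply hpi
      intro i hi
      rw [hy i (Finset.mem_coe.mp hi)]
      exact (hIu i (Finset.mem_coe.mp hi)).2
    rw [← hVC]; exact this
  -- Step 2: turn the neighbourhoods into basic sets
  choose t ht using hnbhd
  let Ex : ∀ x : S, x ∈ C → MS := fun x hx =>
    fI (fun i : MS => if x.1 i = true then i else ⟨i.1ᶜ, i.2.compl⟩) (t x hx)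
  have hEx_mem : ∀ (y : S) (x : S) (hx : x ∈ C),
      y.1 (Ex x hx) = true ↔ ∀ i ∈ t x hx, y.1 i = x.1 i := by
    intro y x hx
    rw [x_fI y.2]
    apply forall₂_congr
    intro i hi
    by_cases h : x.1 i = true
    · rw [if_pos h, h]
    · rw [if_neg h, x_compl y.2 i]
      have hxi : x.1 i = false := by simpa using h
      rw [hxi]
      cases hyi : y.1 i <;> simp
  -- Step 3: compactness
  have hcov : C ⊆ ⋃ x : C, {y : S | y.1 (Ex x.1 x.2) = true} := by
    intro x hx
    refine Set.mem_iUnion.mpr ⟨⟨x, hx⟩, ?_⟩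
    show x.1 (Ex x hx) = true
    exact (hEx_mem x x hx).mpr (fun i _ => rfl)
  have hopen : ∀ x : C, IsOpen {y : S | y.1 (Ex x.1 x.2) = true} := by
    intro x
    have hc : Continuous fun y : S => y.1 (Ex x.1 x.2) :=
      (continuous_apply (A := fun _ : MS => Bool) (Ex x.1 x.2)).comp continuous_subtype_val
    exact hc.isOpen_preimage ({true} : Set Bool) (isOpen_discrete _)
  obtain ⟨F, hF⟩ := (hC.1.isCompact).elim_finite_subcover _ hopen hcov
  -- Step 4: the union of the chosen basic sets
  refine ⟨fU (fun x : C => Ex x.1 x.2) F, ?_⟩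
  ext y
  simp only [Set.mem_setOf_eq]
  rw [x_fU y.2]
  constructor
  · intro hyC
    obtain ⟨x, hxF, hyx⟩ := Set.mem_iUnion₂.mp (hF hyC)
    exact ⟨x, hxF, hyx⟩
  · rintro ⟨x, hxF, hyx⟩
    exact ht x.1 x.2 y ((hEx_mem y x.1 x.2).mp hyx)


lemma Phi_surj (g : LocallyConstant S ℤ) :
    ∃ f : Lp ℝ ⊤ μ, IV f ∧ ∀ x : S, Phi f x = g x := by
  classical
  have hfib : ∀ n : ℤ, ∃ E : MS, g ⁻¹' {n} = {y : S | y.1 E = true} := fun n =>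
    exists_basic (g.isLocallyConstant.isClopen_fiber n)
  choose E hE using hfib
  set s : Finset ℤ := (g.range_finite).toFinset with hs
  set f₀ : X → ℝ := fun t => ∑ n ∈ s, Set.indicator (E n).1 (fun _ => (n : ℝ)) t with hf₀
  have hmeas : Measurable f₀ := by
    apply Finset.measurable_sum
    intro n _
    exact measurable_const.indicator (E n).2
  have hbd : ∀ t, ‖f₀ t‖ ≤ ∑ n ∈ s, |(n : ℝ)| := by
    intro t
    refine le_trans (norm_sum_le _ _) (Finset.sum_le_sum fun n _ => ?_)
    rw [Set.indicator_apply]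
    split_ifs with h
    · simp [Real.norm_eq_abs]
    · simp
  have hmem : MemLp f₀ ⊤ μ :=
    memLp_top_of_bound hmeas.aestronglyMeasurable _ (Filter.Eventually.of_forall hbd)
  have hint : ∀ t, ∃ m : ℤ, f₀ t = (m : ℝ) := by
    intro t
    refine ⟨∑ n ∈ s, if t ∈ (E n).1 then n else 0, ?_⟩
    have hcast : ((∑ n ∈ s, if t ∈ (E n).1 then n else 0 : ℤ) : ℝ) =
        ∑ n ∈ s, Set.indicator (E n).1 (fun _ => (n : ℝ)) t := by
      push_cast
      refine Finset.sum_congr rfl fun n _ => ?_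
      by_cases h : t ∈ (E n).1 <;> simp [Set.indicator_apply, h]
    exact hcast.symm
  have hcoe : ⇑(hmem.toLp f₀) =ᵐ[μ] f₀ := hmem.coeFn_toLp
  have hIV : IV (hmem.toLp f₀) := by
    filter_upwards [hcoe] with t h1
    obtain ⟨m, hm⟩ := hint t
    exact ⟨m, h1.trans hm⟩
  refine ⟨hmem.toLp f₀, hIV, ?_⟩
  intro x
  set n₀ := g x with hn₀
  have hx0 : x.1 (E n₀) = true := by
    have hxmem : x ∈ g ⁻¹' {n₀} := by simp [hn₀]
    rw [hE n₀] at hxmem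
    exact hxmem
  have hn₀s : n₀ ∈ s := by
    rw [hs, Set.Finite.mem_toFinset]
    exact ⟨x, rfl⟩
  set D : ℤ → MS := fun m => if m = n₀ then E n₀ else ⟨(E m).1ᶜ, (E m).2.compl⟩ with hD
  have hDx : x.1 (fI D s) = true := by
    rw [x_fI x.2]
    intro m hms
    by_cases h : m = n₀
    · rw [hD]; simp only [h, if_pos rfl]; exact hx0
    · rw [hD]
      simp only [if_neg h]
      have hfalse : x.1 (E m) = false := by
        cases hxm : x.1 (E m)
        · rfl
        · exfalso
          have hxm' : x ∈ g ⁻¹' {m} := by rw [hE m]; exact hxm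
          have hgm : g x = m := hxm'
          exact h (hn₀.trans hgm).symm
      rw [x_compl x.2 (E m), hfalse]
      rfl
  have hsub : (fI D s).1 ⊆ (lev f₀ hmeas n₀).1 := by
    intro t ht
    have htm : ∀ m ∈ s, t ∈ (D m).1 := by
      intro m hm
      have := Set.mem_iInter₂.mp ht
      exact this m hm
    show (∑ n ∈ s, Set.indicator (E n).1 (fun _ => (n : ℝ)) t) = (n₀ : ℝ)
    have h0 : ∀ m ∈ s, m ≠ n₀ → Set.indicator (E m).1 (fun _ => (m : ℝ)) t = 0 := by
      intro m hms hmne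
      have h2 := htm m hms
      rw [hD] at h2
      simp only [if_neg hmne] at h2
      exact Set.indicator_of_notMem h2 _
    have h1 : n₀ ∉ s → Set.indicator (E n₀).1 (fun _ => (n₀ : ℝ)) t = 0 := fun h =>
      absurd hn₀s h
    rw [Finset.sum_eq_single n₀ h0 h1]
    have hmem1 : t ∈ (E n₀).1 := by
      have h3 := htm n₀ hn₀s
      rw [hD] at h3
      simpa using h3
    exact Set.indicator_of_mem hmem1 _
  have hlev : x.1 (lev f₀ hmeas n₀) = true := x_subset x.2 hsub hDx
  have hrep : f₀ =ᵐ[μ] rep (hmem.toLp f₀) := hcoe.symm.trans (rep_ae _).symm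
  rw [Phi_eq_iff hIV x n₀,
    ← x_lev_ae_congr x.2 hmeas (rep_measurable (hmem.toLp f₀)) hrep n₀]
  exact hlev


/-- The state space as a profinite space yields freeness of `LocallyConstant S ℤ`. -/
lemma free_locallyConstant : Module.Free ℤ (LocallyConstant S ℤ) :=
  LocallyConstant.freeOfProfinite (Profinite.of S)

end IVFree

open IVFree in
/-- The subgroup of the Banach space `L^∞([0,1])` (with Lebesgue measure)
consisting of (equivalence classes of) essentially bounded measurable
functions that are almost everywhere integer-valued is a free Abelian group,
i.e., a free `ℤ`-module. -/
theorem integerValued_Linfty_subgroup_free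
    (A : AddSubgroup (Lp ℝ ⊤ (volume : Measure (Set.Icc (0:ℝ) 1))))
    (hA : ∀ f : Lp ℝ ⊤ (volume : Measure (Set.Icc (0:ℝ) 1)),
      f ∈ A ↔ ∀ᵐ t ∂(volume : Measure (Set.Icc (0:ℝ) 1)), ∃ n : ℤ, f t = (n : ℝ)) :
    Module.Free ℤ A := by
  classical
  have hIV : ∀ f : A, IV (f : Lp ℝ ⊤ μ) := fun f => (hA f.1).mp f.2
  let Ψ : A →+ LocallyConstant S ℤ :=
    { toFun := fun f => ⟨Phi (f : Lp ℝ ⊤ μ), isLocallyConstant_Phi (hIV f)⟩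
      map_zero' := by
        ext x
        exact Phi_zero x
      map_add' := by
        intro f g
        ext x
        exact Phi_add (hIV f) (hIV g) x }
  have hinj : Function.Injective Ψ := by
    rw [injective_iff_map_eq_zero]
    intro f hf
    have h0 : ∀ x : S, Phi (f : Lp ℝ ⊤ μ) x = 0 := by
      intro x
      have := congrArg (fun (h : LocallyConstant S ℤ) => h x) hf
      simpa [Ψ] using this
    have : (f : Lp ℝ ⊤ μ) = 0 := Phi_inj (hIV f) h0
    exact Subtype.ext this
  have hsurj : Function.Surjective Ψ := by
    intro g
    obtain ⟨f, hfIV, hPhi⟩ := Phi_surj g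
    refine ⟨⟨f, (hA f).mpr hfIV⟩, ?_⟩
    ext x
    exact hPhi x
  haveI := free_locallyConstant
  exact Module.Free.of_equiv
    (LinearEquiv.ofBijective Ψ.toIntLinearMap ⟨hinj, hsurj⟩).symm
end
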